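/- arXiv:1512.08299 — 7 statements merged into one kernel-verified Lean document; each statement's English description precedes it below -/
import Mathlib

section
/- For δ=1, Menger's theorem holds in any time-varying graph: the maximum number of 1-disjoint journeys from s to d equals the minimum number of 1-removals (single-contact deletions) needed to make d unreachable from s. -/
/-- A time-varying graph: finite edge set, discrete time span `{1,...,T}`,
edge-presence function `ρ`. Unit edge-traversal delay is built into journeys. -/
structure TVG (V : Type) where
  E : Finset (V × V)
  T : ℕ
  ρ : V × V → ℕ → Bool

variable {V : Type}

/-- A contact: edge `e` is present at slot `t ∈ {1,...,T}`. -/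
def TVG.Contact (G : TVG V) (e : V × V) (t : ℕ) : Prop :=
  e ∈ G.E ∧ 1 ≤ t ∧ t ≤ G.T ∧ G.ρ e t = true

/-- A journey from `s` to `d`: a nonempty time-respecting sequence of contacts
(unit edge delay, strictly increasing slots, completed by slot `T`). -/
structure TVG.Journey (G : TVG V) (s d : V) where
  contacts : List ((V × V) × ℕ)
  ne : contacts ≠ []
  starts : (contacts.head ne).1.1 = s
  ends : (contacts.getLast ne).1.2 = d
  valid : ∀ c ∈ contacts, G.Contact c.1 c.2
  chain : List.Chain' (fun c₁ c₂ => c₁.1.2 = c₂.1.1 ∧ c₁.2 < c₂.2) contacts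

/-- Journey `J` uses edge `e` at slot `t`. -/
def TVG.Journey.uses {G : TVG V} {s d : V} (J : G.Journey s d) (e : V × V) (t : ℕ) : Prop :=
  (e, t) ∈ J.contacts

/-- Two journeys are `δ`-disjoint: they never use the same edge within `δ` slots. -/
def DeltaDisjoint {G : TVG V} {s d : V} (δ : ℕ) (J₁ J₂ : G.Journey s d) : Prop :=
  ∀ e t₁ t₂, J₁.uses e t₁ → J₂.uses e t₂ → δ ≤ Nat.dist t₁ t₂

/-- There exist `m` pairwise `δ`-disjoint journeys from `s` to `d`. -/
def HasDisjointJourneys (G : TVG V) (s d : V) (δ m : ℕ) : Prop :=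
  ∃ Js : Fin m → G.Journey s d, ∀ i j, i ≠ j → DeltaDisjoint δ (Js i) (Js j)

/-- A removal/failure of edge `e` during slots `[t₀, t₀ + dur - 1]` kills contact `c`. -/
def Kills (e : V × V) (t₀ dur : ℕ) (c : (V × V) × ℕ) : Prop :=
  c.1 = e ∧ t₀ ≤ c.2 ∧ c.2 < t₀ + dur

/-- `F` is a set of heads of `δ`-removals whose application leaves no `s`-`d` journey. -/
def IsCutSet (G : TVG V) (s d : V) (δ : ℕ) (F : Finset ((V × V) × ℕ)) : Prop :=
  ∀ J : G.Journey s d, ∃ c ∈ J.contacts, ∃ f ∈ F, Kills f.1 f.2 δ c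

/-- `MaxFlow_δ`: the maximum number of pairwise `δ`-disjoint `s`-`d` journeys. -/
noncomputable def maxFlow (G : TVG V) (s d : V) (δ : ℕ) : ℕ :=
  sSup {m | HasDisjointJourneys G s d δ m}

/-- `MinCut_δ`: the minimum number of `δ`-removals rendering `d` unreachable from `s`. -/
noncomputable def minCut (G : TVG V) (s d : V) (δ : ℕ) : ℕ :=
  sInf {k | ∃ F : Finset ((V × V) × ℕ), F.card = k ∧ IsCutSet G s d δ F}

/-- `(n,δ)`-survivability of the pair `(s,d)`: after any `n` failures, each disabling
one edge for at most `δ` consecutive slots, `d` remains reachable from `s`. -/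
def Survivable (G : TVG V) (s d : V) (n δ : ℕ) : Prop :=
  ∀ F : Finset ((V × V) × ℕ × ℕ), F.card ≤ n → (∀ f ∈ F, f.2.2 ≤ δ) →
    ∃ J : G.Journey s d, ∀ c ∈ J.contacts, ∀ f ∈ F, ¬ Kills f.1 f.2.1 f.2.2 c


set_option linter.unusedSectionVars false

namespace MengerAux

variable {α : Type*} [DecidableEq α]

/-- A walk in the digraph with edge set `E`, from `A` to `B`. -/
structure IsWalk (E : Finset (α × α)) (A B : Finset α) (l : List α) : Prop where
  ne : l ≠ []
  chain : l.Chain' fun a b => (a, b) ∈ E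
  memA : l.head ne ∈ A
  memB : l.getLast ne ∈ B

/-- `S` separates `A` from `B`. -/
def Sep (E : Finset (α × α)) (A B : Finset α) (S : Finset α) : Prop :=
  ∀ l : List α, IsWalk E A B l → ∃ v ∈ l, v ∈ S

/-- Take elements of `l` up to and including the first element belonging to `S`. -/
def takeUntil (S : Finset α) : List α → List α
  | [] => []
  | a :: l => if a ∈ S then [a] else a :: takeUntil S l

lemma takeUntil_prefix (S : Finset α) : ∀ l : List α, takeUntil S l <+: l
  | [] => by simp [takeUntil]
  | a :: l => by
    by_cases h : a ∈ S
    · simp [takeUntil, h]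
    · obtain ⟨t, ht⟩ := takeUntil_prefix S l
      exact ⟨t, by simp [takeUntil, h, ht]⟩

lemma takeUntil_spec (S : Finset α) : ∀ l : List α, (∃ v ∈ l, v ∈ S) →
    ∃ p v, takeUntil S l = p ++ [v] ∧ v ∈ S ∧ ∀ u ∈ p, u ∉ S
  | [], h => by simp at h
  | a :: l, h => by
    by_cases ha : a ∈ S
    · exact ⟨[], a, by simp [takeUntil, ha], ha, by simp⟩
    · obtain ⟨v, hv, hvS⟩ := h
      have hvl : v ∈ l := by
        rcases List.mem_cons.1 hv with rfl | h
        · exact absurd hvS ha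
        · exact h
      obtain ⟨p, w, h1, h2, h3⟩ := takeUntil_spec S l ⟨v, hvl, hvS⟩
      exact ⟨a :: p, w, by simp [takeUntil, ha, h1], h2, by
        intro u hu
        rcases List.mem_cons.1 hu with rfl | h
        · exact ha
        · exact h3 u h⟩

lemma takeUntil_ne_nil (S : Finset α) {l : List α} (h : l ≠ []) : takeUntil S l ≠ [] := by
  cases l with
  | nil => exact absurd rfl h
  | cons a l =>
    by_cases ha : a ∈ S <;> simp [takeUntil, ha]

lemma takeUntil_head (S : Finset α) {l : List α} (h : l ≠ []) :
    (takeUntil S l).head (takeUntil_ne_nil S h) = l.head h := by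
  cases l with
  | nil => exact absurd rfl h
  | cons a l =>
    by_cases ha : a ∈ S <;> simp [takeUntil, ha]

variable {E E' : Finset (α × α)} {A B S S' A' B' : Finset α} {l : List α}

lemma chain'_imp' {R R' : α → α → Prop} :
    ∀ {l : List α}, (∀ a ∈ l.dropLast, ∀ b ∈ l.tail, R a b → R' a b) →
      l.Chain' R → l.Chain' R'
  | [], _, _ => List.isChain_nil
  | [_], _, _ => List.isChain_singleton _
  | a :: b :: t, h, hc => by
    simp only [List.Chain', List.isChain_cons_cons] at hc ⊢
    refine ⟨h a (by simp) b (by simp) hc.1, chain'_imp' (fun x hx y hy hr => ?_) hc.2⟩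
    exact h x (by simpa using Or.inr hx) y
      (List.mem_cons_of_mem b (by simpa using hy)) hr

lemma walk_mono (hE : E ⊆ E') (hA : A ⊆ A') (hB : B ⊆ B') (h : IsWalk E A B l) :
    IsWalk E' A' B' l :=
  ⟨h.ne, h.chain.imp fun _ _ hab => hE hab, hA h.memA, hB h.memB⟩

lemma eq_getLast_of_not_mem_dropLast (hne : l ≠ []) {z : α} (hz : z ∈ l)
    (h : z ∉ l.dropLast) : z = l.getLast hne := by
  conv at hz => rw [← List.dropLast_concat_getLast hne]
  rcases List.mem_append.1 hz with h' | h'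
  · exact absurd h' h
  · simpa using h'

lemma eq_head_of_not_mem_tail (hne : l ≠ []) {z : α} (hz : z ∈ l)
    (h : z ∉ l.tail) : z = l.head hne := by
  conv at hz => rw [← List.cons_head_tail hne]
  rcases List.mem_cons.1 hz with h' | h'
  · exact h'
  · exact absurd h' h

lemma head_eq_head' {l₁ l₂ : List α} (h₁ : l₁ ≠ []) (h₂ : l₂ ≠ []) (h : l₁.head? = l₂.head?) :
    l₁.head h₁ = l₂.head h₂ := by
  rw [List.head?_eq_head h₁, List.head?_eq_head h₂] at h
  exact Option.some.inj h

lemma getLast_eq_getLast' {l₁ l₂ : List α} (h₁ : l₁ ≠ []) (h₂ : l₂ ≠ [])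
    (h : l₁.getLast? = l₂.getLast?) : l₁.getLast h₁ = l₂.getLast h₂ := by
  rw [List.getLast?_eq_getLast h₁, List.getLast?_eq_getLast h₂] at h
  exact Option.some.inj h

lemma trim_prefix (h : IsWalk E A B l) (hex : ∃ v ∈ l, v ∈ S) :
    IsWalk E A S (takeUntil S l) ∧ takeUntil S l <+: l ∧
      ∀ u ∈ (takeUntil S l).dropLast, u ∉ S := by
  obtain ⟨p, v, h1, h2, h3⟩ := takeUntil_spec S l hex
  have hpre := takeUntil_prefix S l
  have hne := takeUntil_ne_nil S h.ne
  refine ⟨⟨hne, h.chain.prefix hpre, ?_, ?_⟩, hpre, ?_⟩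
  · rw [takeUntil_head S h.ne]; exact h.memA
  · have h4 : (takeUntil S l).getLast hne = v := by
      have h5 := List.getLast?_eq_getLast (l := takeUntil S l) hne
      have h6 : (takeUntil S l).getLast? = some v := by
        rw [h1]; exact List.getLast?_concat
      rw [h5] at h6
      exact Option.some.inj h6
    rw [h4]; exact h2
  · rw [h1]; simpa using h3

lemma reverse_walk (h : IsWalk E A B l) :
    IsWalk (E.image Prod.swap) B A l.reverse := by
  have hne : l.reverse ≠ [] := by simpa using h.ne
  refine ⟨hne, ?_, ?_, ?_⟩
  · simp only [List.Chain', List.isChain_reverse]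
    exact h.chain.imp fun a b hab => Finset.mem_image.2 ⟨(a, b), hab, rfl⟩
  · rw [List.head_reverse]; exact h.memB
  · rw [List.getLast_reverse]; exact h.memA

lemma image_swap_swap (E : Finset (α × α)) : (E.image Prod.swap).image Prod.swap = E := by
  rw [Finset.image_image]
  simp [Function.comp_def]

/-- The suffix of `l` starting at the last element belonging to `S`. -/
def dropUntilLast (S : Finset α) (l : List α) : List α := (takeUntil S l.reverse).reverse

lemma trim_suffix (h : IsWalk E A B l) (hex : ∃ v ∈ l, v ∈ S) :
    IsWalk E S B (dropUntilLast S l) ∧ dropUntilLast S l <:+ l ∧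
      ∀ u ∈ (dropUntilLast S l).tail, u ∉ S := by
  have hex' : ∃ v ∈ l.reverse, v ∈ S := by simpa using hex
  obtain ⟨hw, hpre, hdl⟩ := trim_prefix (reverse_walk h) hex'
  have hw2 := reverse_walk hw
  rw [image_swap_swap] at hw2
  refine ⟨hw2, ?_, ?_⟩
  · have := List.reverse_suffix.2 hpre
    simpa [dropUntilLast] using this
  · intro u hu
    apply hdl u
    rw [dropUntilLast, List.tail_reverse] at hu
    simpa using hu


/-- Key claim: a trimmed `A`–`Sx` walk and a trimmed `Sy`–`B` walk can only meet
at a common endpoint lying in `S'`. -/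
lemma key_claim {Sx Sy : Finset α}
    (hsep : Sep E A B S') (hSx : S' ⊆ Sx) (hSy : S' ⊆ Sy)
    {Q R : List α} (hQ : IsWalk E A Sx Q) (hQ' : ∀ u ∈ Q.dropLast, u ∉ Sx)
    (hR : IsWalk E Sy B R) (hR' : ∀ u ∈ R.tail, u ∉ Sy)
    {z : α} (hzQ : z ∈ Q) (hzR : z ∈ R) :
    z = Q.getLast hQ.ne ∧ z = R.head hR.ne ∧ z ∈ S' := by
  obtain ⟨q₁, q₂, hQdec⟩ := List.append_of_mem hzQ
  obtain ⟨r₁, r₂, hRdec⟩ := List.append_of_mem hzR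
  -- the combined walk
  set P : List α := (q₁ ++ [z]) ++ r₂ with hP
  have hPne : P ≠ [] := by simp [hP]
  have hchainR : (z :: r₂).Chain' fun a b => (a, b) ∈ E :=
    hR.chain.suffix (by rw [hRdec]; exact (List.suffix_append r₁ (z :: r₂)))
  have hwP : IsWalk E A B P := by
    refine ⟨hPne, ?_, ?_, ?_⟩
    · refine List.IsChain.append ?_ ?_ ?_
      · exact hQ.chain.prefix (by rw [hQdec]; exact ⟨q₂, by simp⟩)
      · exact hchainR.tail
      · intro a ha b hb
        simp only [List.getLast?_concat, Option.mem_some_iff] at ha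
        subst ha
        exact (List.isChain_cons.1 hchainR).1 b hb
    · have : P.head hPne = Q.head hQ.ne := by
        apply head_eq_head'
        rw [hP, hQdec]
        cases q₁ <;> simp
      rw [this]; exact hQ.memA
    · have : P.getLast hPne = R.getLast hR.ne := by
        apply getLast_eq_getLast'
        rw [hP, hRdec]
        simp [List.getLast?_eq_getLast (l := z :: r₂) (by simp)]
      rw [this]; exact hR.memB
  obtain ⟨w, hwPmem, hwS'⟩ := hsep P hwP
  have hq₁sub : q₁ ⊆ Q.dropLast := by
    rw [hQdec, List.dropLast_append_cons]
    exact (List.subset_append_left _ _)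
  have hr₂sub : r₂ ⊆ R.tail := by
    rw [hRdec]
    cases r₁ with
    | nil => simp
    | cons a t =>
      simp only [List.cons_append, List.tail_cons]
      intro u hu
      exact List.mem_append.2 (Or.inr (List.mem_cons_of_mem _ hu))
  have hwz : w = z := by
    rcases List.mem_append.1 hwPmem with h' | h'
    · rcases List.mem_append.1 h' with h'' | h''
      · exact absurd (hSx hwS') (hQ' w (hq₁sub h''))
      · simpa using h''
    · exact absurd (hSy hwS') (hR' w (hr₂sub h'))
  subst hwz
  refine ⟨?_, ?_, hwS'⟩
  · exact eq_getLast_of_not_mem_dropLast hQ.ne hzQ (fun hc => hQ' _ hc (hSx hwS'))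
  · exact eq_head_of_not_mem_tail hR.ne hzR (fun hc => hR' _ hc (hSy hwS'))

lemma chain_to_erase {e : α × α} {l : List α}
    (h : (∀ u ∈ l.dropLast, u ≠ e.1) ∨ (∀ u ∈ l.tail, u ≠ e.2))
    (hc : l.Chain' fun a b => (a, b) ∈ E) :
    l.Chain' fun a b => (a, b) ∈ E.erase e := by
  refine chain'_imp' (fun a ha b hb hab => Finset.mem_erase.2 ⟨fun heq => ?_, hab⟩) hc
  rcases h with h | h
  · exact h a ha (by rw [← heq])
  · exact h b hb (by rw [← heq])

theorem menger_core : ∀ (n : ℕ) (E : Finset (α × α)), E.card = n →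
    ∀ (A B : Finset α) (k : ℕ), (∀ S, Sep E A B S → k ≤ S.card) →
    ∃ W : Fin k → List α, (∀ i, IsWalk E A B (W i)) ∧
      ∀ i j, i ≠ j → List.Disjoint (W i) (W j) := by
  intro n
  induction n using Nat.strong_induction_on with
  | _ n ih =>
  intro E hEcard A B k hmin
  rcases Finset.eq_empty_or_nonempty E with rfl | ⟨e, he⟩
  · -- Base case: no edges.  All walks are singletons in `A ∩ B`.
    have hsing : ∀ l, IsWalk (∅ : Finset (α × α)) A B l → ∃ a, l = [a] ∧ a ∈ A ∩ B := by
      intro l hl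
      match l, hl with
      | [], hl => exact absurd rfl hl.ne
      | [a], hl =>
        exact ⟨a, rfl, Finset.mem_inter.2 ⟨hl.memA, by simpa using hl.memB⟩⟩
      | a :: b :: t, hl => exact absurd (List.isChain_cons_cons.1 hl.chain).1 (by simp)
    have hk : k ≤ (A ∩ B).card := by
      refine hmin _ ?_
      intro l hl
      obtain ⟨a, rfl, ha⟩ := hsing l hl
      exact ⟨a, by simp, ha⟩
    have hlen : k ≤ (A ∩ B).toList.length := by rwa [Finset.length_toList]
    refine ⟨fun i => [(A ∩ B).toList.get ⟨i, lt_of_lt_of_le i.2 hlen⟩],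
      fun i => ?_, fun i j hij => ?_⟩
    · have hm : (A ∩ B).toList.get ⟨i, lt_of_lt_of_le i.2 hlen⟩ ∈ A ∩ B := by
        rw [← Finset.mem_toList]; exact List.get_mem _ _
      exact ⟨by simp, List.isChain_singleton _,
        by simpa using (Finset.mem_inter.1 hm).1, by simpa using (Finset.mem_inter.1 hm).2⟩
    · intro a ha hb
      simp only [List.mem_singleton] at ha hb
      subst ha
      have := ((Finset.nodup_toList (A ∩ B)).get_inj_iff).1 hb.symm
      apply hij
      have := congrArg Fin.val this
      exact Fin.ext (by simpa using this.symm)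
  · -- Inductive step.
    have hlt : (E.erase e).card < n := hEcard ▸ Finset.card_erase_lt_of_mem he
    by_cases hc : ∀ S, Sep (E.erase e) A B S → k ≤ S.card
    · obtain ⟨W, hW, hdisj⟩ := ih _ hlt (E.erase e) rfl A B k hc
      exact ⟨W, fun i => walk_mono (Finset.erase_subset _ _) subset_rfl subset_rfl (hW i), hdisj⟩
    push_neg at hc
    obtain ⟨S', hS'sep, hS'lt⟩ := hc
    set Sx := insert e.1 S' with hSxdef
    set Sy := insert e.2 S' with hSydef
    -- a walk avoiding e.1 (resp. e.2) is a walk in `E.erase e`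
    have hav1 : ∀ l : List α, e.1 ∉ l → (l.Chain' fun a b => (a, b) ∈ E) →
        l.Chain' fun a b => (a, b) ∈ E.erase e := by
      intro l hx hc
      exact chain_to_erase (Or.inl fun u hu hue =>
        hx (hue ▸ List.dropLast_subset l hu)) hc
    have hav2 : ∀ l : List α, e.2 ∉ l → (l.Chain' fun a b => (a, b) ∈ E) →
        l.Chain' fun a b => (a, b) ∈ E.erase e := by
      intro l hy hc
      exact chain_to_erase (Or.inr fun u hu hue =>
        hy (hue ▸ List.mem_of_mem_tail hu)) hc
    have hSxsep : Sep E A B Sx := by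
      intro l hl
      by_cases hx : e.1 ∈ l
      · exact ⟨e.1, hx, Finset.mem_insert_self _ _⟩
      · obtain ⟨v, hv, hvS'⟩ := hS'sep l ⟨hl.ne, hav1 l hx hl.chain, hl.memA, hl.memB⟩
        exact ⟨v, hv, Finset.mem_insert_of_mem hvS'⟩
    have hSysep : Sep E A B Sy := by
      intro l hl
      by_cases hy : e.2 ∈ l
      · exact ⟨e.2, hy, Finset.mem_insert_self _ _⟩
      · obtain ⟨v, hv, hvS'⟩ := hS'sep l ⟨hl.ne, hav2 l hy hl.chain, hl.memA, hl.memB⟩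
        exact ⟨v, hv, Finset.mem_insert_of_mem hvS'⟩
    have hxS' : e.1 ∉ S' := by
      intro hx
      have : Sx = S' := Finset.insert_eq_self.2 hx
      rw [this] at hSxsep
      have := hmin S' hSxsep
      omega
    have hyS' : e.2 ∉ S' := by
      intro hy
      have : Sy = S' := Finset.insert_eq_self.2 hy
      rw [this] at hSysep
      have := hmin S' hSysep
      omega
    have hSxcard : Sx.card = k := by
      have h1 := hmin Sx hSxsep
      have h2 : Sx.card = S'.card + 1 := Finset.card_insert_of_notMem hxS'
      omega
    have hSycard : Sy.card = k := by
      have h1 := hmin Sy hSysep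
      have h2 : Sy.card = S'.card + 1 := Finset.card_insert_of_notMem hyS'
      omega
    -- every A–Sx separator of E−e is an A–B separator of E
    have hA_Sx : ∀ S, Sep (E.erase e) A Sx S → k ≤ S.card := by
      intro S hS
      apply hmin
      intro l hl
      by_cases hx : e.1 ∈ l
      · obtain ⟨hw, hpre, hdl⟩ := trim_prefix (S := {e.1}) hl ⟨e.1, hx, Finset.mem_singleton_self _⟩
        have hw' : IsWalk (E.erase e) A Sx (takeUntil {e.1} l) := by
          refine ⟨hw.ne, chain_to_erase (Or.inl fun u hu hue => ?_) hw.chain, hw.memA, ?_⟩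
          · exact hdl u hu (by simp [hue])
          · have := hw.memB
            simp only [Finset.mem_singleton] at this
            rw [this]
            exact Finset.mem_insert_self _ _
        obtain ⟨v, hv, hvS⟩ := hS _ hw'
        exact ⟨v, hpre.subset hv, hvS⟩
      · have hl' : IsWalk (E.erase e) A B l := ⟨hl.ne, hav1 l hx hl.chain, hl.memA, hl.memB⟩
        obtain ⟨w, hwmem, hwS'⟩ := hS'sep l hl'
        obtain ⟨hw, hpre, -⟩ := trim_prefix (S := S') hl' ⟨w, hwmem, hwS'⟩
        obtain ⟨v, hv, hvS⟩ := hS _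
          (walk_mono subset_rfl subset_rfl (Finset.subset_insert _ _) hw)
        exact ⟨v, hpre.subset hv, hvS⟩
    -- every Sy–B separator of E−e is an A–B separator of E
    have hSy_B : ∀ S, Sep (E.erase e) Sy B S → k ≤ S.card := by
      intro S hS
      apply hmin
      intro l hl
      by_cases hy : e.2 ∈ l
      · obtain ⟨hw, hsuf, hdl⟩ := trim_suffix (S := {e.2}) hl ⟨e.2, hy, Finset.mem_singleton_self _⟩
        have hw' : IsWalk (E.erase e) Sy B (dropUntilLast {e.2} l) := by
          refine ⟨hw.ne, chain_to_erase (Or.inr fun u hu hue => ?_) hw.chain, ?_, hw.memB⟩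
          · exact hdl u hu (by simp [hue])
          · have := hw.memA
            simp only [Finset.mem_singleton] at this
            rw [this]
            exact Finset.mem_insert_self _ _
        obtain ⟨v, hv, hvS⟩ := hS _ hw'
        exact ⟨v, hsuf.subset hv, hvS⟩
      · have hl' : IsWalk (E.erase e) A B l := ⟨hl.ne, hav2 l hy hl.chain, hl.memA, hl.memB⟩
        obtain ⟨w, hwmem, hwS'⟩ := hS'sep l hl'
        obtain ⟨hw, hsuf, -⟩ := trim_suffix (S := S') hl' ⟨w, hwmem, hwS'⟩
        obtain ⟨v, hv, hvS⟩ := hS _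
          (walk_mono subset_rfl (Finset.subset_insert _ _) subset_rfl hw)
        exact ⟨v, hsuf.subset hv, hvS⟩
    -- apply the induction hypothesis twice
    obtain ⟨Q, hQw, hQd⟩ := ih _ hlt (E.erase e) rfl A Sx k hA_Sx
    obtain ⟨R, hRw, hRd⟩ := ih _ hlt (E.erase e) rfl Sy B k hSy_B
    -- trim the walks
    set Q' : Fin k → List α := fun i => takeUntil Sx (Q i) with hQ'def
    have hQtrim : ∀ i, IsWalk (E.erase e) A Sx (Q' i) ∧ Q' i <+: Q i ∧
        ∀ u ∈ (Q' i).dropLast, u ∉ Sx :=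
      fun i => trim_prefix (hQw i) ⟨_, List.getLast_mem (hQw i).ne, (hQw i).memB⟩
    set R' : Fin k → List α := fun j => dropUntilLast Sy (R j) with hR'def
    have hRtrim : ∀ j, IsWalk (E.erase e) Sy B (R' j) ∧ R' j <:+ R j ∧
        ∀ u ∈ (R' j).tail, u ∉ Sy :=
      fun j => trim_suffix (hRw j) ⟨_, List.head_mem (hRw j).ne, (hRw j).memA⟩
    have hQ'd : ∀ i j, i ≠ j → List.Disjoint (Q' i) (Q' j) := fun i j hij a ha hb =>
      hQd i j hij ((hQtrim i).2.1.subset ha) ((hQtrim j).2.1.subset hb)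
    have hR'd : ∀ i j, i ≠ j → List.Disjoint (R' i) (R' j) := fun i j hij a ha hb =>
      hRd i j hij ((hRtrim i).2.1.subset ha) ((hRtrim j).2.1.subset hb)
    set g : Fin k → α := fun i => (Q' i).getLast (hQtrim i).1.ne with hgdef
    set f : Fin k → α := fun j => (R' j).head (hRtrim j).1.ne with hfdef
    have hg_memQ : ∀ i, g i ∈ Q' i := fun i => List.getLast_mem _
    have hf_memR : ∀ j, f j ∈ R' j := fun j => List.head_mem _
    have hg_mem : ∀ i, g i ∈ Sx := fun i => (hQtrim i).1.memB
    have hf_mem : ∀ j, f j ∈ Sy := fun j => (hRtrim j).1.memA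
    have hg_inj : Function.Injective g := by
      intro i j hij
      by_contra hne
      exact hQ'd i j hne (hg_memQ i) (by rw [hij]; exact hg_memQ j)
    have hf_inj : Function.Injective f := by
      intro i j hij
      by_contra hne
      exact hR'd i j hne (hf_memR i) (by rw [hij]; exact hf_memR j)
    have hf_surj : ∀ w ∈ Sy, ∃ j, f j = w := by
      intro w hw
      have hbij : Function.Bijective (fun j : Fin k => (⟨f j, hf_mem j⟩ : ↥Sy)) := by
        rw [Fintype.bijective_iff_injective_and_card]
        constructor
        · intro i j hij
          exact hf_inj (congrArg Subtype.val hij)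
        · simp [hSycard]
      obtain ⟨j, hj⟩ := hbij.2 ⟨w, hw⟩
      exact ⟨j, congrArg Subtype.val hj⟩
    set targ : Fin k → α := fun i => if g i = e.1 then e.2 else g i with htargdef
    have htarg_mem : ∀ i, targ i ∈ Sy := by
      intro i
      simp only [htargdef]
      split_ifs with h
      · exact Finset.mem_insert_self _ _
      · rcases Finset.mem_insert.1 (hg_mem i) with h' | h'
        · exact absurd h' h
        · exact Finset.mem_insert_of_mem h'
    have hσ : ∀ i, ∃ j, f j = targ i := fun i => hf_surj _ (htarg_mem i)
    set σ : Fin k → Fin k := fun i => (hσ i).choose with hσdef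
    have hfσ : ∀ i, f (σ i) = targ i := fun i => (hσ i).choose_spec
    have htarg_inj : Function.Injective targ := by
      intro i j hij
      simp only [htargdef] at hij
      split_ifs at hij with h1 h2 h2
      · exact hg_inj (h1.trans h2.symm)
      · exfalso
        rcases Finset.mem_insert.1 (hg_mem j) with h' | h'
        · exact h2 h'
        · rw [← hij] at h'
          exact hyS' h'
      · exfalso
        rcases Finset.mem_insert.1 (hg_mem i) with h' | h'
        · exact h1 h'
        · rw [hij] at h'
          exact hyS' h'
      · exact hg_inj hij
    have hσ_inj : Function.Injective σ := by
      intro i j hij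
      apply htarg_inj
      rw [← hfσ i, ← hfσ j, hij]
    -- the glued walks
    set W : Fin k → List α := fun i =>
      if g i = e.1 then Q' i ++ R' (σ i) else Q' i ++ (R' (σ i)).tail with hWdef
    have hQ'chainE : ∀ i, (Q' i).Chain' fun a b => (a, b) ∈ E :=
      fun i => (hQtrim i).1.chain.imp fun _ _ h => Finset.erase_subset _ _ h
    have hR'chainE : ∀ j, (R' j).Chain' fun a b => (a, b) ∈ E :=
      fun j => (hRtrim j).1.chain.imp fun _ _ h => Finset.erase_subset _ _ h
    have hWwalk : ∀ i, IsWalk E A B (W i) := by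
      intro i
      by_cases hgi : g i = e.1
      · have hfy : f (σ i) = e.2 := by rw [hfσ]; simp [htargdef, hgi]
        have hne : Q' i ++ R' (σ i) ≠ [] := by
          simp [(hQtrim i).1.ne]
        have hWi : W i = Q' i ++ R' (σ i) := by simp only [hWdef]; rw [if_pos hgi]
        rw [hWi]
        refine ⟨hne, ?_, ?_, ?_⟩
        · refine List.IsChain.append (hQ'chainE i) (hR'chainE (σ i)) ?_
          intro a ha b hb
          rw [List.getLast?_eq_getLast (hQtrim i).1.ne, Option.mem_some_iff] at ha
          rw [List.head?_eq_head (hRtrim (σ i)).1.ne, Option.mem_some_iff] at hb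
          have h1 : a = e.1 := by rw [← ha]; exact hgi
          have h2 : b = e.2 := by rw [← hb]; exact hfy
          have : (a, b) = e := by rw [Prod.ext_iff]; exact ⟨h1, h2⟩
          rw [this]
          exact he
        · have : (Q' i ++ R' (σ i)).head hne = (Q' i).head (hQtrim i).1.ne := by
            apply head_eq_head'
            rw [List.head?_append, List.head?_eq_head (hQtrim i).1.ne]
            simp
          rw [this]
          exact (hQtrim i).1.memA
        · have : (Q' i ++ R' (σ i)).getLast hne = (R' (σ i)).getLast (hRtrim (σ i)).1.ne := by
            apply getLast_eq_getLast'
            rw [List.getLast?_append, List.getLast?_eq_getLast (hRtrim (σ i)).1.ne]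
            simp
          rw [this]
          exact (hRtrim (σ i)).1.memB
      · have hfg : f (σ i) = g i := by rw [hfσ]; simp [htargdef, hgi]
        have hcons : f (σ i) :: (R' (σ i)).tail = R' (σ i) :=
          List.cons_head_tail (hRtrim (σ i)).1.ne
        have hne : Q' i ++ (R' (σ i)).tail ≠ [] := by
          simp [(hQtrim i).1.ne]
        have hWi : W i = Q' i ++ (R' (σ i)).tail := by simp only [hWdef]; rw [if_neg hgi]
        rw [hWi]
        refine ⟨hne, ?_, ?_, ?_⟩
        · refine List.IsChain.append (hQ'chainE i) ?_ ?_
          · have := (hR'chainE (σ i)).tail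
            exact this
          · intro a ha b hb
            rw [List.getLast?_eq_getLast (hQtrim i).1.ne, Option.mem_some_iff] at ha
            have hchain := hR'chainE (σ i)
            rw [← hcons] at hchain; simp only [List.Chain', List.isChain_cons] at hchain
            have h3 := hchain.1 b hb
            have h1 : a = f (σ i) := by rw [← ha, hfg]
            rw [h1]
            exact h3
        · have : (Q' i ++ (R' (σ i)).tail).head hne = (Q' i).head (hQtrim i).1.ne := by
            apply head_eq_head'
            rw [List.head?_append, List.head?_eq_head (hQtrim i).1.ne]
            simp
          rw [this]
          exact (hQtrim i).1.memA
        · by_cases htl : (R' (σ i)).tail = []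
          · have hRs : R' (σ i) = [f (σ i)] := by rw [← hcons, htl]
            have h2 : (Q' i ++ (R' (σ i)).tail).getLast hne = (Q' i).getLast (hQtrim i).1.ne := by
              apply getLast_eq_getLast'
              rw [htl, List.append_nil]
            rw [h2]
            have h4 := List.getLast?_eq_getLast (l := R' (σ i)) (hRtrim (σ i)).1.ne
            have h5 : (R' (σ i)).getLast? = some (f (σ i)) := by rw [hRs]; rfl
            rw [h4] at h5
            have h7 : f (σ i) ∈ B := (Option.some.inj h5) ▸ (hRtrim (σ i)).1.memB
            rw [show (Q' i).getLast (hQtrim i).1.ne = g i from rfl, ← hfg]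
            exact h7
          · have : (Q' i ++ (R' (σ i)).tail).getLast hne =
                (R' (σ i)).getLast (hRtrim (σ i)).1.ne := by
              obtain ⟨c, t, hct⟩ := List.exists_cons_of_ne_nil htl
              have h8 : (R' (σ i)).getLast? = (R' (σ i)).tail.getLast? := by
                conv_lhs => rw [← hcons, hct]
                rw [hct, List.getLast?_cons_cons]
              apply getLast_eq_getLast'
              rw [List.getLast?_append, ← h8, List.getLast?_eq_getLast (hRtrim (σ i)).1.ne]
              simp [Option.or]
            rw [this]
            exact (hRtrim (σ i)).1.memB
    refine ⟨W, hWwalk, ?_⟩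
    intro i j hij a hai haj
    have hsplit : ∀ m (a' : α), a' ∈ W m → a' ∈ Q' m ∨ a' ∈ R' (σ m) := by
      intro m a' ha'
      by_cases hgm : g m = e.1
      · have hWm : W m = Q' m ++ R' (σ m) := by simp only [hWdef]; rw [if_pos hgm]
        rw [hWm] at ha'
        exact List.mem_append.1 ha'
      · have hWm : W m = Q' m ++ (R' (σ m)).tail := by simp only [hWdef]; rw [if_neg hgm]
        rw [hWm] at ha'
        rcases List.mem_append.1 ha' with h | h
        · exact Or.inl h
        · exact Or.inr (List.mem_of_mem_tail h)
    have hkey : ∀ i' j' : Fin k, a ∈ Q' i' → a ∈ R' (σ j') → i' = j' := by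
      intro i' j' hQa hRa
      obtain ⟨h1, h2, h3⟩ := key_claim hS'sep (Finset.subset_insert _ _) (Finset.subset_insert _ _)
        (hQtrim i').1 (hQtrim i').2.2 (hRtrim (σ j')).1 (hRtrim (σ j')).2.2 hQa hRa
      -- h1 : a = g i',  h2 : a = f (σ j') = targ j',  h3 : a ∈ S'
      have h2' : a = targ j' := h2.trans (hfσ j')
      by_cases hgj : g j' = e.1
      · exfalso
        rw [htargdef] at h2'
        simp only [if_pos hgj] at h2'
        rw [h2'] at h3
        exact hyS' h3
      · rw [htargdef] at h2'
        simp only [if_neg hgj] at h2'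
        exact hg_inj (h1.symm.trans h2')
    rcases hsplit i a hai with h1 | h1 <;> rcases hsplit j a haj with h2 | h2
    · exact hQ'd i j hij h1 h2
    · exact hij (hkey i j h1 h2)
    · exact hij ((hkey j i h2 h1).symm)
    · exact hR'd (σ i) (σ j) (fun h => hij (hσ_inj h)) h1 h2

end MengerAux

namespace MengerGlue

open MengerAux

attribute [local instance] Classical.propDecidable

variable {V : Type}

/-- The finite set of all contacts of `G`. -/
noncomputable def cset (G : TVG V) : Finset ((V × V) × ℕ) :=
  (G.E ×ˢ Finset.Icc 1 G.T).filter fun c => G.ρ c.1 c.2 = true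

lemma mem_cset {G : TVG V} {c : (V × V) × ℕ} : c ∈ cset G ↔ G.Contact c.1 c.2 := by
  simp only [cset, Finset.mem_filter, Finset.mem_product, Finset.mem_Icc, TVG.Contact]
  tauto

/-- The time-respecting adjacency between contacts. -/
noncomputable def eset (G : TVG V) : Finset (((V × V) × ℕ) × ((V × V) × ℕ)) :=
  ((cset G) ×ˢ (cset G)).filter fun p => p.1.1.2 = p.2.1.1 ∧ p.1.2 < p.2.2

lemma mem_eset {G : TVG V} {p : ((V × V) × ℕ) × ((V × V) × ℕ)} :
    p ∈ eset G ↔ p.1 ∈ cset G ∧ p.2 ∈ cset G ∧ p.1.1.2 = p.2.1.1 ∧ p.1.2 < p.2.2 := by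
  simp only [eset, Finset.mem_filter, Finset.mem_product]
  tauto

/-- Contacts leaving `s`. -/
noncomputable def srcSet (G : TVG V) (s : V) : Finset ((V × V) × ℕ) :=
  (cset G).filter fun c => c.1.1 = s

/-- Contacts entering `d`. -/
noncomputable def dstSet (G : TVG V) (d : V) : Finset ((V × V) × ℕ) :=
  (cset G).filter fun c => c.1.2 = d

lemma journey_walk {G : TVG V} {s d : V} (J : G.Journey s d) :
    IsWalk (eset G) (srcSet G s) (dstSet G d) J.contacts := by
  refine ⟨J.ne, ?_, ?_, ?_⟩
  · have hc := J.chain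
    simp only [List.Chain', List.isChain_iff_getElem] at hc ⊢
    intro i hi
    refine mem_eset.2 ⟨?_, ?_, hc i hi⟩
    · exact mem_cset.2 (J.valid _ (List.getElem_mem _))
    · exact mem_cset.2 (J.valid _ (List.getElem_mem _))
  · refine Finset.mem_filter.2 ⟨mem_cset.2 (J.valid _ (List.head_mem J.ne)), J.starts⟩
  · refine Finset.mem_filter.2 ⟨mem_cset.2 (J.valid _ (List.getLast_mem J.ne)), J.ends⟩

lemma chain_cset {G : TVG V} : ∀ (l : List ((V × V) × ℕ)) (a : (V × V) × ℕ), a ∈ cset G →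
    ((a :: l).Chain' fun c₁ c₂ => (c₁, c₂) ∈ eset G) → ∀ c ∈ a :: l, c ∈ cset G
  | [], a, ha, _, c, hc => by
    rw [List.mem_singleton] at hc
    rwa [hc]
  | b :: t, a, ha, hchain, c, hc => by
    simp only [List.Chain', List.isChain_cons_cons] at hchain
    have hb : b ∈ cset G := (mem_eset.1 hchain.1).2.1
    rcases List.mem_cons.1 hc with rfl | hc'
    · exact ha
    · exact chain_cset t b hb hchain.2 c hc'

lemma walk_journey {G : TVG V} {s d : V} {l : List ((V × V) × ℕ)}
    (hl : IsWalk (eset G) (srcSet G s) (dstSet G d) l) :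
    ∃ J : G.Journey s d, J.contacts = l := by
  have hcs : ∀ c ∈ l, c ∈ cset G := by
    obtain ⟨a, t, rfl⟩ := List.exists_cons_of_ne_nil hl.ne
    have ha : a ∈ cset G := (Finset.mem_filter.1 hl.memA).1
    exact chain_cset t a ha hl.chain
  refine ⟨⟨l, hl.ne, ?_, ?_, fun c hc => mem_cset.1 (hcs c hc), ?_⟩, rfl⟩
  · exact (Finset.mem_filter.1 hl.memA).2
  · exact (Finset.mem_filter.1 hl.memB).2
  · exact hl.chain.imp fun c₁ c₂ h => (mem_eset.1 h).2.2

lemma kills_iff {f c : (V × V) × ℕ} : Kills f.1 f.2 1 c ↔ c = f := by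
  constructor
  · rintro ⟨h1, h2, h3⟩
    have : c.2 = f.2 := by omega
    exact Prod.ext h1 this
  · rintro rfl
    exact ⟨rfl, le_refl _, by omega⟩

lemma isCutSet_iff {G : TVG V} {s d : V} {F : Finset ((V × V) × ℕ)} :
    IsCutSet G s d 1 F ↔ Sep (eset G) (srcSet G s) (dstSet G d) F := by
  constructor
  · intro h l hl
    obtain ⟨J, rfl⟩ := walk_journey hl
    obtain ⟨c, hc, f, hf, hk⟩ := h J
    exact ⟨c, hc, (kills_iff.1 hk) ▸ hf⟩
  · intro h J
    obtain ⟨c, hc, hcF⟩ := h J.contacts (journey_walk J)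
    exact ⟨c, hc, c, hcF, kills_iff.2 rfl⟩

lemma deltaDisjoint_iff {G : TVG V} {s d : V} {J₁ J₂ : G.Journey s d} :
    DeltaDisjoint 1 J₁ J₂ ↔ List.Disjoint J₁.contacts J₂.contacts := by
  constructor
  · intro h c hc1 hc2
    have := h c.1 c.2 c.2 (by simpa [TVG.Journey.uses] using hc1)
      (by simpa [TVG.Journey.uses] using hc2)
    simp [Nat.dist_self] at this
  · intro h e t₁ t₂ h1 h2
    by_contra hlt
    have ht : t₁ = t₂ := Nat.eq_of_dist_eq_zero (by omega)
    exact h h1 (by rwa [ht])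

lemma flow_le_cut {G : TVG V} {s d : V} {m : ℕ} (hm : HasDisjointJourneys G s d 1 m)
    {F : Finset ((V × V) × ℕ)} (hF : IsCutSet G s d 1 F) : m ≤ F.card := by
  obtain ⟨Js, hJs⟩ := hm
  have hpick : ∀ i : Fin m, ∃ c, c ∈ (Js i).contacts ∧ c ∈ F := by
    intro i
    obtain ⟨c, hc, f, hf, hk⟩ := hF (Js i)
    exact ⟨c, hc, kills_iff.1 hk ▸ hf⟩
  choose c hc1 hc2 using hpick
  have hinj : Function.Injective c := by
    intro i j hij
    by_contra hne
    have hd := hJs i j hne (c i).1 (c i).2 (c j).2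
      (by simpa [TVG.Journey.uses] using hc1 i)
      (by rw [hij]; simpa [TVG.Journey.uses] using hc1 j)
    rw [hij] at hd
    simp [Nat.dist_self] at hd
  have := Fintype.card_le_of_injective (fun i => (⟨c i, hc2 i⟩ : ↥F))
    (fun i j h => hinj (congrArg Subtype.val h))
  simpa using this

lemma cset_cut {G : TVG V} {s d : V} : IsCutSet G s d 1 (cset G) := by
  intro J
  exact ⟨_, List.head_mem J.ne, _, mem_cset.2 (J.valid _ (List.head_mem J.ne)),
    kills_iff.2 rfl⟩

end MengerGlue

/-- Menger's theorem for `δ = 1` in time-varying graphs: the maximum number of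
pairwise `1`-disjoint `s`-`d` journeys equals the minimum number of `1`-removals
(single-contact deletions) rendering `d` unreachable from `s`. -/
theorem menger_delta_one (G : TVG V) (s d : V) :
    maxFlow G s d 1 = minCut G s d 1 := by
  classical
  have hcsetcut : IsCutSet G s d 1 (MengerGlue.cset G) := MengerGlue.cset_cut
  have hmem : minCut G s d 1 ∈
      {k | ∃ F : Finset ((V × V) × ℕ), F.card = k ∧ IsCutSet G s d 1 F} :=
    Nat.sInf_mem ⟨(MengerGlue.cset G).card, MengerGlue.cset G, rfl, hcsetcut⟩
  obtain ⟨F₀, hF₀card, hF₀cut⟩ := hmem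
  have h0 : (0 : ℕ) ∈ {m | HasDisjointJourneys G s d 1 m} :=
    ⟨fun i => i.elim0, fun i => i.elim0⟩
  have hbdd : ∀ m ∈ {m | HasDisjointJourneys G s d 1 m}, m ≤ (MengerGlue.cset G).card :=
    fun _ hm => MengerGlue.flow_le_cut hm hcsetcut
  have hsepbound : ∀ S, MengerAux.Sep (MengerGlue.eset G) (MengerGlue.srcSet G s)
      (MengerGlue.dstSet G d) S → minCut G s d 1 ≤ S.card := by
    intro S hS
    exact Nat.sInf_le ⟨S, rfl, MengerGlue.isCutSet_iff.2 hS⟩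
  obtain ⟨W, hWw, hWd⟩ := MengerAux.menger_core ((MengerGlue.eset G).card)
    (MengerGlue.eset G) rfl (MengerGlue.srcSet G s) (MengerGlue.dstSet G d)
    (minCut G s d 1) hsepbound
  have hflow : HasDisjointJourneys G s d 1 (minCut G s d 1) := by
    choose J hJ using fun i => MengerGlue.walk_journey (hWw i)
    exact ⟨J, fun i j hij => MengerGlue.deltaDisjoint_iff.2
      (by rw [hJ i, hJ j]; exact hWd i j hij)⟩
  apply le_antisymm
  · apply csSup_le ⟨0, h0⟩
    intro m hm
    rw [← hF₀card]
    exact MengerGlue.flow_le_cut hm hF₀cut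
  · exact le_csSup ⟨(MengerGlue.cset G).card, fun m hm => hbdd m hm⟩ hflow
end

section
/- The maximum number of 1-disjoint s-d journeys in a time-varying graph equals the maximum number of internally node-disjoint s-d paths in its Line Graph, and the minimum number of 1-removals disconnecting s from d equals the minimum s-d node cut of the Line Graph. -/
variable {V : Type}

/-- Nodes of the Line Graph: a node for `s`, a node for `d`, and one node per contact. -/
inductive LNode (V : Type) where
  | src : LNode V
  | dst : LNode V
  | ctc : (V × V) × ℕ → LNode V

/-- Adjacency in the Line Graph: `s → v_{e,t}` iff `start(e) = s`; `v_{e,t} → d` iff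
`end(e) = d`; `v_{e₁,t₁} → v_{e₂,t₂}` iff `end(e₁) = start(e₂)` and `t₂ > t₁`;
in each case the involved contacts must be present. -/
def LAdj (G : TVG V) (s d : V) : LNode V → LNode V → Prop
  | .src, .ctc c => G.Contact c.1 c.2 ∧ c.1.1 = s
  | .ctc c, .dst => G.Contact c.1 c.2 ∧ c.1.2 = d
  | .ctc c₁, .ctc c₂ =>
      G.Contact c₁.1 c₁.2 ∧ G.Contact c₂.1 c₂.2 ∧ c₁.1.2 = c₂.1.1 ∧ c₁.2 < c₂.2
  | _, _ => False

/-- A directed `s`-`d` path in the Line Graph, recorded by the list of its internal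
(contact) nodes. -/
def IsLinePath (G : TVG V) (s d : V) (l : List ((V × V) × ℕ)) : Prop :=
  List.Chain (LAdj G s d) LNode.src (l.map LNode.ctc ++ [LNode.dst])


private lemma chain_aux (G : TVG V) (s d : V) (a : (V × V) × ℕ) (l : List ((V × V) × ℕ)) :
    List.Chain (LAdj G s d) (LNode.ctc a) (l.map LNode.ctc ++ [LNode.dst]) ↔
      (∀ c ∈ a :: l, G.Contact c.1 c.2) ∧
      List.Chain' (fun c₁ c₂ => c₁.1.2 = c₂.1.1 ∧ c₁.2 < c₂.2) (a :: l) ∧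
      ((a :: l).getLast (by simp)).1.2 = d := by
  induction l generalizing a with
  | nil => simp [LAdj, List.Chain, List.Chain']
  | cons b l ih =>
    simp only [List.map_cons, List.cons_append, List.Chain, List.isChain_cons_cons] at *
    rw [ih]
    simp only [LAdj, List.getLast_cons, List.mem_cons, List.Chain', List.isChain_cons_cons]
    constructor
    · rintro ⟨⟨ha, hb, hR⟩, hall, hch, hlast⟩
      refine ⟨?_, ⟨hR, hch⟩, ?_⟩
      · rintro c (rfl | hc); · exact ha
        · exact hall c hc
      · exact hlast
    · rintro ⟨hall, ⟨hR, hch⟩, hlast⟩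
      refine ⟨⟨hall a (Or.inl rfl), hall b (Or.inr (Or.inl rfl)), hR⟩,
        fun c hc => hall c (Or.inr hc), hch, ?_⟩
      exact hlast

private lemma linePath_iff (G : TVG V) (s d : V) (l : List ((V × V) × ℕ)) :
    IsLinePath G s d l ↔ ∃ h : l ≠ [],
      (l.head h).1.1 = s ∧ (l.getLast h).1.2 = d ∧
      (∀ c ∈ l, G.Contact c.1 c.2) ∧
      List.Chain' (fun c₁ c₂ => c₁.1.2 = c₂.1.1 ∧ c₁.2 < c₂.2) l := by
  cases l with
  | nil => simp [IsLinePath, LAdj, List.Chain]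
  | cons a l =>
    rw [IsLinePath]
    simp only [List.map_cons, List.cons_append, List.Chain, List.isChain_cons_cons]
    rw [show List.IsChain (LAdj G s d) (LNode.ctc a :: (l.map LNode.ctc ++ [LNode.dst])) ↔ _ from chain_aux G s d a l]
    simp only [LAdj]
    constructor
    · rintro ⟨⟨ha, hs⟩, hall, hch, hlast⟩
      exact ⟨by simp, hs, hlast, hall, hch⟩
    · rintro ⟨_, hs, hlast, hall, hch⟩
      exact ⟨⟨hall a (List.mem_cons_self (a := a) (l := l)), hs⟩, hall, hch, hlast⟩

private lemma exists_journey {G : TVG V} {s d : V} {l : List ((V × V) × ℕ)}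
    (h : IsLinePath G s d l) : ∃ J : G.Journey s d, J.contacts = l := by
  obtain ⟨hne, hs, hd, hv, hc⟩ := (linePath_iff G s d l).mp h
  exact ⟨⟨l, hne, hs, hd, hv, hc⟩, rfl⟩

private lemma journey_linePath {G : TVG V} {s d : V} (J : G.Journey s d) :
    IsLinePath G s d J.contacts :=
  (linePath_iff G s d J.contacts).mpr ⟨J.ne, J.starts, J.ends, J.valid, J.chain⟩

/-- `MaxFlow₁` equals the maximum number of internally node-disjoint `s`-`d` paths in
the Line Graph, and `MinCut₁` equals the minimum `s`-`d` node cut of the Line Graph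
(internal nodes of a Line-Graph path are contact nodes). -/
theorem flow_cut_via_lineGraph (G : TVG V) (s d : V) :
    maxFlow G s d 1 =
      sSup {m | ∃ ls : Fin m → List ((V × V) × ℕ),
        (∀ i, IsLinePath G s d (ls i)) ∧
        ∀ i j, i ≠ j → List.Disjoint (ls i) (ls j)} ∧
    minCut G s d 1 =
      sInf {k | ∃ S : Finset ((V × V) × ℕ), S.card = k ∧
        ∀ l : List ((V × V) × ℕ), IsLinePath G s d l → ∃ c ∈ l, c ∈ S} := by
  constructor
  · unfold maxFlow
    congr 1
    ext m
    constructor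
    · rintro ⟨Js, hJs⟩
      refine ⟨fun i => (Js i).contacts, fun i => journey_linePath _, fun i j hij c hc hc' => ?_⟩
      have := hJs i j hij c.1 c.2 c.2 (by simpa [TVG.Journey.uses]) (by simpa [TVG.Journey.uses])
      simp [Nat.dist_self] at this
    · rintro ⟨ls, hls, hdisj⟩
      choose Js hJs using fun i => exists_journey (hls i)
      refine ⟨Js, fun i j hij e t₁ t₂ h₁ h₂ => ?_⟩
      unfold TVG.Journey.uses at h₁ h₂
      rw [hJs] at h₁ h₂
      rcases eq_or_ne t₁ t₂ with rfl | hne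
      · exact absurd h₂ (hdisj i j hij h₁)
      · unfold Nat.dist; omega
  · unfold minCut
    congr 1
    ext k
    have key : ∀ F : Finset ((V × V) × ℕ), IsCutSet G s d 1 F ↔
        ∀ l : List ((V × V) × ℕ), IsLinePath G s d l → ∃ c ∈ l, c ∈ F := by
      intro F
      constructor
      · intro hF l hl
        obtain ⟨J, rfl⟩ := exists_journey hl
        obtain ⟨c, hc, f, hf, h1, h2, h3⟩ := hF J
        have : c = f := by
          obtain ⟨e, t⟩ := c; obtain ⟨e', t'⟩ := f
          simp_all; omega
        exact ⟨c, hc, this ▸ hf⟩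
      · intro hF J
        obtain ⟨c, hc, hcF⟩ := hF J.contacts (journey_linePath J)
        exact ⟨c, hc, c, hcF, rfl, le_refl _, by omega⟩
    constructor
    · rintro ⟨F, hcard, hF⟩
      exact ⟨F, hcard, (key F).mp hF⟩
    · rintro ⟨S, hcard, hS⟩
      exact ⟨S, hcard, (key S).mpr hS⟩
end

section
/- For every δ≥2 and every k≥1, there exists a time-varying graph with a source-destination pair (s,d) such that the maximum number of δ-disjoint s-d journeys equals 1 while the minimum number of δ-removals needed to disconnect d from s equals k; consequently the gap ratio MinCut_δ/MaxFlow_δ can be arbitrarily large. -/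
variable {V : Type}

set_option maxHeartbeats 1000000

namespace Gap

abbrev VV : Type := ℕ × ℕ × ℕ
def vs : VV := (0,0,0)
def vd : VV := (1,0,0)
def vx (a b : ℕ) : VV := (2,a,b)
def vy (a b : ℕ) : VV := (3,a,b)
def vw (a b : ℕ) : VV := (4,a,b)

def tu (a b : ℕ) : ℕ := 3*(a*a+b)

/-- contact predicate -/
def CP (n : ℕ) (e : VV × VV) (t : ℕ) : Prop :=
  let t1 := e.1.1; let a := e.1.2.1; let b := e.1.2.2
  let t2 := e.2.1; let a' := e.2.2.1; let b' := e.2.2.2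
  -- hub
  (t1 = 2 ∧ t2 = 3 ∧ a' = a ∧ b' = b ∧ 1 ≤ b ∧ b < a ∧ a ≤ n ∧
      (t = tu a b ∨ t = tu a b + 1)) ∨
  -- row / diag
  (t1 = 3 ∧ t2 = 2 ∧ 1 ≤ b ∧ b < a ∧ a + 1 ≤ n ∧ a' = a + 1 ∧
      ((b' = b ∧ t = tu a b + 1) ∨ (b + 1 = a ∧ b' = a ∧ t = tu a b + 2))) ∨
  -- climb1
  (t1 = 3 ∧ t2 = 4 ∧ a' = a ∧ b' = b ∧ 1 ≤ b ∧ b + 1 < a ∧ a ≤ n ∧ t = tu a b + 2) ∨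
  -- climb2
  (t1 = 4 ∧ t2 = 2 ∧ a' = a ∧ b' = b + 1 ∧ 1 ≤ b ∧ b + 1 < a ∧ a ≤ n ∧ t = tu a (b+1)) ∨
  -- start
  (t1 = 0 ∧ a = 0 ∧ b = 0 ∧ t2 = 2 ∧ b' = 1 ∧ 2 ≤ a' ∧ a' ≤ n ∧
      (t = tu a' 1 ∨ (a' = 2 ∧ t = 14))) ∨
  -- exit
  (t1 = 3 ∧ a = n ∧ 1 ≤ b ∧ b < n ∧ t2 = 1 ∧ a' = 0 ∧ b' = 0 ∧
      (t = tu n b + 1 ∨ (b + 1 = n ∧ t = tu n b + 2)))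

instance (n : ℕ) (e : VV × VV) (t : ℕ) : Decidable (CP n e t) := by
  unfold CP; infer_instance

def TT (n : ℕ) : ℕ := 3*(n*n+n)+3

def VSET (n : ℕ) : Finset VV := (Finset.range 5) ×ˢ (Finset.range (n+2)) ×ˢ (Finset.range (n+2))

def G (n : ℕ) : TVG VV :=
  { E := VSET n ×ˢ VSET n, T := TT n, ρ := fun e t => decide (CP n e t) }

lemma tauTT {n a b : ℕ} (ha : a ≤ n) (hb : b ≤ n) : 3*(a*a+b) + 2 ≤ 3*(n*n+n)+3 := by
  have h : a*a ≤ n*n := Nat.mul_le_mul ha ha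
  omega

lemma CP_contact {n : ℕ} {e : VV × VV} {t : ℕ} (h : CP n e t) : (G n).Contact e t := by
  have hρ : (G n).ρ e t = true := decide_eq_true h
  have hT : (G n).T = 3*(n*n+n)+3 := rfl
  obtain ⟨⟨e11, e1a, e1b⟩, ⟨e21, e2a, e2b⟩⟩ := e
  simp only [CP] at h
  have hmem : ∀ x : VV, x.1 < 5 → x.2.1 < n + 2 → x.2.2 < n + 2 → x ∈ VSET n := by
    intro x h1 h2 h3
    simp only [VSET, Finset.mem_product, Finset.mem_range]
    exact ⟨h1, h2, h3⟩
  have hE : e11 < 5 → e1a < n+2 → e1b < n+2 → e21 < 5 → e2a < n+2 → e2b < n+2 →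
      ((e11, e1a, e1b), (e21, e2a, e2b)) ∈ (G n).E := by
    intro a1 a2 a3 a4 a5 a6
    exact Finset.mem_product.2 ⟨hmem _ a1 a2 a3, hmem _ a4 a5 a6⟩
  refine ⟨?_, ?_, ?_, hρ⟩ <;>
  [skip; skip; rw [hT]] <;>
  · simp only [tu] at h
    rcases h with ⟨h1,h2,h3,h4,h5,h6,h7,h8⟩ | ⟨h1,h2,h3,h4,h5,h6,h8⟩ |
      ⟨h1,h2,h3,h4,h5,h6,h7,h8⟩ | ⟨h1,h2,h3,h4,h5,h6,h7,h8⟩ |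
      ⟨h1,h2,h3,h4,h5,h6,h7,h8⟩ | ⟨h1,h2,h3,h4,h5,h6,h7,h8⟩
    · have hb := tauTT (n := n) (a := e1a) (b := e1b) (by omega) (by omega)
      first
      | exact hE (by omega) (by omega) (by omega) (by omega) (by omega) (by omega)
      | omega
    · have hb := tauTT (n := n) (a := e1a) (b := e1b) (by omega) (by omega)
      first
      | exact hE (by omega) (by omega) (by omega) (by omega) (by omega) (by omega)
      | omega
    · have hb := tauTT (n := n) (a := e1a) (b := e1b) (by omega) (by omega)
      first
      | exact hE (by omega) (by omega) (by omega) (by omega) (by omega) (by omega)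
      | omega
    · have hb := tauTT (n := n) (a := e1a) (b := e1b + 1) (by omega) (by omega)
      first
      | exact hE (by omega) (by omega) (by omega) (by omega) (by omega) (by omega)
      | omega
    · have hb := tauTT (n := n) (a := e2a) (b := 1) (by omega) (by omega)
      have hb2 : n ≤ n*n := Nat.le_mul_of_pos_left n (by omega)
      first
      | exact hE (by omega) (by omega) (by omega) (by omega) (by omega) (by omega)
      | omega
    · have hb := tauTT (n := n) (a := n) (b := e1b) (by omega) (by omega)
      first
      | exact hE (by omega) (by omega) (by omega) (by omega) (by omega) (by omega)
      | omega

lemma contact_iff {n : ℕ} {e : VV × VV} {t : ℕ} : (G n).Contact e t ↔ CP n e t := by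
  constructor
  · rintro ⟨-, -, -, h⟩
    simpa only [G, decide_eq_true_eq] using h
  · exact CP_contact


abbrev C : Type := (VV × VV) × ℕ

def Lk (c₁ c₂ : C) : Prop := c₁.1.2 = c₂.1.1 ∧ c₁.2 < c₂.2

def Valid (n : ℕ) (l : List C) : Prop := ∀ c ∈ l, CP n c.1 c.2

def StartsAt (v : VV) (t₀ : ℕ) : List C → Prop
  | [] => False
  | c :: _ => c.1.1 = v ∧ t₀ < c.2

def EndsD (l : List C) : Prop := ∃ h : l ≠ [], (l.getLast h).1.2 = vd

def HubIn (l : List C) (A : ℕ) : Prop := ∃ B t, (((vx A B), (vy A B)), t) ∈ l ∧ 1 ≤ B ∧ B < A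

lemma cp_from_x {n a b : ℕ} {e : VV × VV} {t : ℕ} (h : CP n e t) (hs : e.1 = vx a b) :
    e.2 = vy a b ∧ 1 ≤ b ∧ b < a ∧ a ≤ n ∧ (t = tu a b ∨ t = tu a b + 1) := by
  obtain ⟨⟨e11, e1a, e1b⟩, ⟨e21, e2a, e2b⟩⟩ := e
  simp only [vx, Prod.mk.injEq] at hs
  obtain ⟨h1, h2, h3⟩ := hs
  subst h1; subst h2; subst h3
  simp only [CP] at h
  rcases h with ⟨h1,h2,h3,h4,h5,h6,h7,h8⟩ | ⟨h1,h2,h3,h4,h5,h6,h8⟩ |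
      ⟨h1,h2,h3,h4,h5,h6,h7,h8⟩ | ⟨h1,h2,h3,h4,h5,h6,h7,h8⟩ |
      ⟨h1,h2,h3,h4,h5,h6,h7,h8⟩ | ⟨h1,h2,h3,h4,h5,h6,h7,h8⟩ <;>
    first
    | (exact absurd h1 (by omega))
    | (refine ⟨?_, h5, h6, h7, h8⟩; simp only [vy, Prod.mk.injEq]; exact ⟨h2, h3, h4⟩)

lemma cp_from_w {n a b : ℕ} {e : VV × VV} {t : ℕ} (h : CP n e t) (hs : e.1 = vw a b) :
    e.2 = vx a (b+1) ∧ t = tu a (b+1) ∧ 1 ≤ b ∧ b + 1 < a ∧ a ≤ n := by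
  obtain ⟨⟨e11, e1a, e1b⟩, ⟨e21, e2a, e2b⟩⟩ := e
  simp only [vw, Prod.mk.injEq] at hs
  obtain ⟨h1, h2, h3⟩ := hs
  subst h1; subst h2; subst h3
  simp only [CP] at h
  rcases h with ⟨h1,h2,h3,h4,h5,h6,h7,h8⟩ | ⟨h1,h2,h3,h4,h5,h6,h8⟩ |
      ⟨h1,h2,h3,h4,h5,h6,h7,h8⟩ | ⟨h1,h2,h3,h4,h5,h6,h7,h8⟩ |
      ⟨h1,h2,h3,h4,h5,h6,h7,h8⟩ | ⟨h1,h2,h3,h4,h5,h6,h7,h8⟩ <;>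
    first
    | (exact absurd h1 (by omega))
    | (refine ⟨?_, h8, h5, h6, h7⟩; simp only [vx, Prod.mk.injEq]; exact ⟨h2, h3, h4⟩)

lemma cp_from_s {n : ℕ} {e : VV × VV} {t : ℕ} (h : CP n e t) (hs : e.1 = vs) :
    ∃ p, e.2 = vx p 1 ∧ 2 ≤ p ∧ p ≤ n ∧ (t = tu p 1 ∨ (p = 2 ∧ t = 14)) := by
  obtain ⟨⟨e11, e1a, e1b⟩, ⟨e21, e2a, e2b⟩⟩ := e
  simp only [vs, Prod.mk.injEq] at hs
  obtain ⟨h1, h2, h3⟩ := hs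
  subst h1; subst h2; subst h3
  simp only [CP] at h
  rcases h with ⟨h1,h2,h3,h4,h5,h6,h7,h8⟩ | ⟨h1,h2,h3,h4,h5,h6,h8⟩ |
      ⟨h1,h2,h3,h4,h5,h6,h7,h8⟩ | ⟨h1,h2,h3,h4,h5,h6,h7,h8⟩ |
      ⟨h1,h2,h3,h4,h5,h6,h7,h8⟩ | ⟨h1,h2,h3,h4,h5,h6,h7,h8⟩ <;>
    first
    | (exact absurd h1 (by omega))
    | (exact ⟨e2a, by simp only [vx, Prod.mk.injEq]; exact ⟨h4, trivial, h5⟩, h6, h7, h8⟩)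

lemma cp_from_d {n : ℕ} {e : VV × VV} {t : ℕ} (h : CP n e t) (hs : e.1 = vd) : False := by
  obtain ⟨⟨e11, e1a, e1b⟩, ⟨e21, e2a, e2b⟩⟩ := e
  simp only [vd, Prod.mk.injEq] at hs
  obtain ⟨h1, h2, h3⟩ := hs
  subst h1; subst h2; subst h3
  simp only [CP] at h
  rcases h with ⟨h1,h2,h3,h4,h5,h6,h7,h8⟩ | ⟨h1,h2,h3,h4,h5,h6,h8⟩ |
      ⟨h1,h2,h3,h4,h5,h6,h7,h8⟩ | ⟨h1,h2,h3,h4,h5,h6,h7,h8⟩ |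
      ⟨h1,h2,h3,h4,h5,h6,h7,h8⟩ | ⟨h1,h2,h3,h4,h5,h6,h7,h8⟩ <;>
    exact absurd h1 (by omega)

lemma cp_from_y {n a b : ℕ} {e : VV × VV} {t : ℕ} (h : CP n e t) (hs : e.1 = vy a b) :
    (a + 1 ≤ n ∧ 1 ≤ b ∧ b < a ∧ e.2 = vx (a+1) b ∧ t = tu a b + 1) ∨
    (a + 1 ≤ n ∧ b + 1 = a ∧ e.2 = vx (a+1) a ∧ t = tu a b + 2) ∨
    (1 ≤ b ∧ b + 1 < a ∧ a ≤ n ∧ e.2 = vw a b ∧ t = tu a b + 2) ∨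
    (a = n ∧ 1 ≤ b ∧ b < n ∧ e.2 = vd ∧ (t = tu n b + 1 ∨ (b + 1 = n ∧ t = tu n b + 2))) := by
  obtain ⟨⟨e11, e1a, e1b⟩, ⟨e21, e2a, e2b⟩⟩ := e
  simp only [vy, Prod.mk.injEq] at hs
  obtain ⟨h1, h2, h3⟩ := hs
  subst h1; subst h2; subst h3
  simp only [CP] at h
  rcases h with ⟨h1,h2,h3,h4,h5,h6,h7,h8⟩ | ⟨h1,h2,h3,h4,h5,h6,⟨h7,h8⟩|⟨h7,h7b,h8⟩⟩ |
      ⟨h1,h2,h3,h4,h5,h6,h7,h8⟩ | ⟨h1,h2,h3,h4,h5,h6,h7,h8⟩ |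
      ⟨h1,h2,h3,h4,h5,h6,h7,h8⟩ | ⟨h1,h2,h3,h4,h5,h6,h7,h8⟩
  · exact absurd h1 (by omega)
  · refine Or.inl ⟨h5, h3, h4, ?_, h8⟩
    simp only [vx, Prod.mk.injEq]; exact ⟨h2, h6, h7⟩
  · refine Or.inr (Or.inl ⟨h5, h7, ?_, h8⟩)
    simp only [vx, Prod.mk.injEq]; exact ⟨h2, h6, h7b⟩
  · refine Or.inr (Or.inr (Or.inl ⟨h5, h6, h7, ?_, h8⟩))
    simp only [vw, Prod.mk.injEq]; exact ⟨h2, h3, h4⟩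
  · exact absurd h1 (by omega)
  · exact absurd h1 (by omega)
  · refine Or.inr (Or.inr (Or.inr ⟨h2, h3, h4, ?_, by rw [← h2] at h8 ⊢; exact h8⟩))
    simp only [vd, Prod.mk.injEq]; exact ⟨h5, h6, h7⟩

lemma endsD_tail {c : C} {l : List C} (h : EndsD (c :: l)) (hl : l ≠ []) : EndsD l := by
  obtain ⟨hne, hLast⟩ := h
  exact ⟨hl, by rwa [List.getLast_cons hl] at hLast⟩

lemma endsD_single {c : C} (h : EndsD [c]) : c.1.2 = vd := by
  obtain ⟨hne, hLast⟩ := h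
  simpa using hLast

lemma hubIn_cons {c : C} {l : List C} {A : ℕ} (h : HubIn l A) : HubIn (c :: l) A := by
  obtain ⟨B, t, ht, h1, h2⟩ := h
  exact ⟨B, t, List.mem_cons_of_mem _ ht, h1, h2⟩

/-- Column-coverage. -/
theorem cover {n : ℕ} : ∀ l : List C, Valid n l → List.Chain' Lk l → EndsD l →
    ∀ a b t₀,
      ((StartsAt (vx a b) t₀ l → ∀ A, a ≤ A → A ≤ n → HubIn l A) ∧
       (StartsAt (vy a b) t₀ l → ∀ A, a + 1 ≤ A → A ≤ n → HubIn l A) ∧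
       (StartsAt (vw a b) t₀ l → ∀ A, a ≤ A → A ≤ n → HubIn l A)) := by
  intro l
  induction l with
  | nil => intro _ _ _ a b t₀; exact ⟨fun h => h.elim, fun h => h.elim, fun h => h.elim⟩
  | cons c l' IH =>
    intro hv hc he a b t₀
    have hcpc : CP n c.1 c.2 := hv c (List.mem_cons_self)
    have hv' : Valid n l' := fun x hx => hv x (List.mem_cons_of_mem _ hx)
    have hc' : List.Chain' Lk l' := hc.tail
    refine ⟨?_, ?_, ?_⟩
    · rintro ⟨hsrc, -⟩ A hA1 hA2
      obtain ⟨htgt, hb1, hba, han, hts⟩ := cp_from_x hcpc hsrc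
      rcases eq_or_ne A a with rfl | hAa
      · exact ⟨b, c.2, by rw [← hsrc, ← htgt]; exact ⟨List.mem_cons_self, hb1, hba⟩⟩
      match l', he with
      | [], he =>
        exact absurd (endsD_single he) (by rw [htgt]; simp [vy, vd])
      | c₂ :: l'', he =>
        have hl'' : Lk c c₂ := (List.isChain_cons_cons.mp hc).1
        have hstart : StartsAt (vy a b) c.2 (c₂ :: l'') := ⟨by rw [← hl''.1, htgt], hl''.2⟩
        have := ((IH hv' hc' (endsD_tail he (by simp)) a b c.2).2.1) hstart A (by omega) hA2
        exact hubIn_cons this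
    · rintro ⟨hsrc, -⟩ A hA1 hA2
      rcases cp_from_y hcpc hsrc with ⟨hn, hb1, hba, htgt, ht⟩ | ⟨hn, hba, htgt, ht⟩ |
        ⟨hb1, hba, han, htgt, ht⟩ | ⟨han, hb1, hbn, htgt, ht⟩
      · match l', he with
        | [], he => exact absurd (endsD_single he) (by rw [htgt]; simp [vx, vd])
        | c₂ :: l'', he =>
          have hl'' : Lk c c₂ := (List.isChain_cons_cons.mp hc).1
          have hstart : StartsAt (vx (a+1) b) c.2 (c₂ :: l'') := ⟨by rw [← hl''.1, htgt], hl''.2⟩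
          have := ((IH hv' hc' (endsD_tail he (by simp)) (a+1) b c.2).1) hstart A hA1 hA2
          exact hubIn_cons this
      · match l', he with
        | [], he => exact absurd (endsD_single he) (by rw [htgt]; simp [vx, vd])
        | c₂ :: l'', he =>
          have hl'' : Lk c c₂ := (List.isChain_cons_cons.mp hc).1
          have hstart : StartsAt (vx (a+1) a) c.2 (c₂ :: l'') := ⟨by rw [← hl''.1, htgt], hl''.2⟩
          have := ((IH hv' hc' (endsD_tail he (by simp)) (a+1) a c.2).1) hstart A hA1 hA2
          exact hubIn_cons this
      · match l', he with
        | [], he => exact absurd (endsD_single he) (by rw [htgt]; simp [vw, vd])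
        | c₂ :: l'', he =>
          have hl'' : Lk c c₂ := (List.isChain_cons_cons.mp hc).1
          have hstart : StartsAt (vw a b) c.2 (c₂ :: l'') := ⟨by rw [← hl''.1, htgt], hl''.2⟩
          have := ((IH hv' hc' (endsD_tail he (by simp)) a b c.2).2.2) hstart A (by omega) hA2
          exact hubIn_cons this
      · omega
    · rintro ⟨hsrc, -⟩ A hA1 hA2
      obtain ⟨htgt, ht, hb1, hba, han⟩ := cp_from_w hcpc hsrc
      match l', he with
      | [], he => exact absurd (endsD_single he) (by rw [htgt]; simp [vx, vd])
      | c₂ :: l'', he =>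
        have hl'' : Lk c c₂ := (List.isChain_cons_cons.mp hc).1
        have hstart : StartsAt (vx a (b+1)) c.2 (c₂ :: l'') := ⟨by rw [← hl''.1, htgt], hl''.2⟩
        have := ((IH hv' hc' (endsD_tail he (by simp)) a (b+1) c.2).1) hstart A hA1 hA2
        exact hubIn_cons this


def HighHub (l : List C) (a b : ℕ) : Prop := (((vx a b), (vy a b)), tu a b + 1) ∈ l

def HubAt (l : List C) (A B : ℕ) : Prop := ∃ t, (((vx A B), (vy A B)), t) ∈ l

lemma highHub_cons {c : C} {l : List C} {a b : ℕ} (h : HighHub l a b) : HighHub (c :: l) a b :=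
  List.mem_cons_of_mem _ h

lemma hubAt_cons {c : C} {l : List C} {A B : ℕ} (h : HubAt l A B) : HubAt (c :: l) A B := by
  obtain ⟨t, ht⟩ := h; exact ⟨t, List.mem_cons_of_mem _ ht⟩

lemma first_hub {n : ℕ} {l : List C} {A B t₀ : ℕ} (hv : Valid n l)
    (hs : StartsAt (vx A B) t₀ l) : HubAt l A B := by
  match l, hs with
  | c :: l', hs =>
    obtain ⟨hsrc, -⟩ := hs
    obtain ⟨htgt, -, -, -, -⟩ := cp_from_x (hv c (List.mem_cons_self)) hsrc
    refine ⟨c.2, ?_⟩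
    have heq : (((vx A B), (vy A B)), c.2) = c := by
      rw [← hsrc, ← htgt]
    rw [heq]; exact List.mem_cons_self

/-- Forced-climb lemma. -/
theorem forced {n : ℕ} : ∀ l : List C, Valid n l → List.Chain' Lk l → EndsD l →
    ∀ a b t₀,
      ((StartsAt (vx a b) t₀ l → tu a b ≤ t₀ →
          (∀ b', b ≤ b' → b' < a → HighHub l a b') ∧ (a + 1 ≤ n → HubAt l (a+1) a)) ∧
       (StartsAt (vy a b) t₀ l → tu a b + 1 ≤ t₀ →
          (∀ b', b + 1 ≤ b' → b' < a → HighHub l a b') ∧ (a + 1 ≤ n → HubAt l (a+1) a)) ∧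
       (StartsAt (vw a b) t₀ l →
          (∀ b', b + 1 ≤ b' → b' < a → HighHub l a b') ∧ (a + 1 ≤ n → HubAt l (a+1) a))) := by
  intro l
  induction l with
  | nil => intro _ _ _ a b t₀; exact ⟨fun h => h.elim, fun h => h.elim, fun h => h.elim⟩
  | cons c l' IH =>
    intro hv hc he a b t₀
    have hcpc : CP n c.1 c.2 := hv c (List.mem_cons_self)
    have hv' : Valid n l' := fun x hx => hv x (List.mem_cons_of_mem _ hx)
    have hc' : List.Chain' Lk l' := hc.tail
    refine ⟨?_, ?_, ?_⟩
    · rintro ⟨hsrc, ht0⟩ hsync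
      obtain ⟨htgt, hb1, hba, han, hts⟩ := cp_from_x hcpc hsrc
      have ht1 : c.2 = tu a b + 1 := by omega
      have hhigh : HighHub (c :: l') a b := by
        have heq : (((vx a b), (vy a b)), tu a b + 1) = c := by
          rw [← hsrc, ← htgt, ← ht1]
        show (((vx a b), (vy a b)), tu a b + 1) ∈ c :: l'
        rw [heq]; exact List.mem_cons_self
      match l', he with
      | [], he => exact absurd (endsD_single he) (by rw [htgt]; simp [vy, vd])
      | c₂ :: l'', he =>
        have hl'' : Lk c c₂ := (List.isChain_cons_cons.mp hc).1
        have hstart : StartsAt (vy a b) c.2 (c₂ :: l'') := ⟨by rw [← hl''.1, htgt], hl''.2⟩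
        have hrec := ((IH hv' hc' (endsD_tail he (by simp)) a b c.2).2.1) hstart (by omega)
        constructor
        · intro b' hb'1 hb'2
          rcases eq_or_ne b' b with rfl | hne
          · exact hhigh
          · exact highHub_cons (hrec.1 b' (by omega) hb'2)
        · intro hn; exact hubAt_cons (hrec.2 hn)
    · rintro ⟨hsrc, ht0⟩ hsync
      rcases cp_from_y hcpc hsrc with ⟨hn, hb1, hba, htgt, ht⟩ | ⟨hn, hba, htgt, ht⟩ |
        ⟨hb1, hba, han, htgt, ht⟩ | ⟨han, hb1, hbn, htgt, ht⟩
      · omega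
      · -- diag
        refine ⟨fun b' h1 h2 => absurd (h1.trans_lt h2) (by omega), fun hnn => ?_⟩
        match l', he with
        | [], he => exact absurd (endsD_single he) (by rw [htgt]; simp [vx, vd])
        | c₂ :: l'', he =>
          have hl'' : Lk c c₂ := (List.isChain_cons_cons.mp hc).1
          have hstart : StartsAt (vx (a+1) a) c.2 (c₂ :: l'') := ⟨by rw [← hl''.1, htgt], hl''.2⟩
          exact hubAt_cons (first_hub hv' hstart)
      · -- climb1
        match l', he with
        | [], he => exact absurd (endsD_single he) (by rw [htgt]; simp [vw, vd])
        | c₂ :: l'', he =>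
          have hl'' : Lk c c₂ := (List.isChain_cons_cons.mp hc).1
          have hstart : StartsAt (vw a b) c.2 (c₂ :: l'') := ⟨by rw [← hl''.1, htgt], hl''.2⟩
          have hrec := ((IH hv' hc' (endsD_tail he (by simp)) a b c.2).2.2) hstart
          exact ⟨fun b' h1 h2 => highHub_cons (hrec.1 b' h1 h2), fun hn => hubAt_cons (hrec.2 hn)⟩
      · -- exit
        refine ⟨fun b' h1 h2 => ?_, fun hnn => absurd hnn (by omega)⟩
        exfalso
        rcases ht with h | ⟨hb2, h⟩
        · rw [← han] at h; omega
        · omega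
    · rintro ⟨hsrc, ht0⟩
      obtain ⟨htgt, ht, hb1, hba, han⟩ := cp_from_w hcpc hsrc
      match l', he with
      | [], he => exact absurd (endsD_single he) (by rw [htgt]; simp [vx, vd])
      | c₂ :: l'', he =>
        have hl'' : Lk c c₂ := (List.isChain_cons_cons.mp hc).1
        have hstart : StartsAt (vx a (b+1)) c.2 (c₂ :: l'') := ⟨by rw [← hl''.1, htgt], hl''.2⟩
        have hrec := ((IH hv' hc' (endsD_tail he (by simp)) a (b+1) c.2).1) hstart (by omega)
        exact ⟨fun b' h1 h2 => highHub_cons (hrec.1 b' h1 h2), fun hn => hubAt_cons (hrec.2 hn)⟩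


lemma tu_succ (a b : ℕ) : tu a (b+1) = tu a b + 3 := by unfold tu; ring

lemma tu_step {a b b' : ℕ} (hba : b ≤ a) (hb' : 1 ≤ b') : tu a b + 3 ≤ tu (a+1) b' := by
  have h : (a+1)*(a+1) = a*a + 2*a + 1 := by ring
  unfold tu; rw [h]; omega

/-- edge belongs to lane `p` -/
def InLane (n p : ℕ) (e : VV × VV) : Prop :=
  let t1 := e.1.1; let a := e.1.2.1; let b := e.1.2.2
  let t2 := e.2.1; let a2 := e.2.2.1; let b2 := e.2.2.2
  (t1 = 2 ∧ (a = p ∨ b = p)) ∨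
  (t1 = 3 ∧ t2 = 2 ∧ ((b2 = b ∧ b = p) ∨ (b2 = a ∧ a = p))) ∨
  (t1 = 3 ∧ t2 = 4 ∧ a = p) ∨
  (t1 = 4 ∧ a = p) ∨
  (t1 = 0 ∧ t2 = 2 ∧ (a2 = p ∨ (a2 = 2 ∧ p = 1))) ∨
  (t1 = 3 ∧ t2 = 1 ∧ (b = p ∨ (b + 1 = n ∧ p = n)))

instance (n p : ℕ) (e : VV × VV) : Decidable (InLane n p e) := by
  unfold InLane; infer_instance

lemma lane_le2 {n : ℕ} {e : VV × VV} {p₁ p₂ p₃ : ℕ} (h1 : InLane n p₁ e)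
    (h2 : InLane n p₂ e) (h3 : InLane n p₃ e) : p₁ = p₂ ∨ p₁ = p₃ ∨ p₂ = p₃ := by
  simp only [InLane] at h1 h2 h3
  rcases h1 with ⟨hA,hB⟩|⟨hA,hB,hC⟩|⟨hA,hB,hC⟩|⟨hA,hB⟩|⟨hA,hB,hC⟩|⟨hA,hB,hC⟩ <;>
  rcases h2 with ⟨gA,gB⟩|⟨gA,gB,gC⟩|⟨gA,gB,gC⟩|⟨gA,gB⟩|⟨gA,gB,gC⟩|⟨gA,gB,gC⟩ <;>
  rcases h3 with ⟨fA,fB⟩|⟨fA,fB,fC⟩|⟨fA,fB,fC⟩|⟨fA,fB⟩|⟨fA,fB,fC⟩|⟨fA,fB,fC⟩ <;>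
  omega

def endsd (l : List C) : Prop := EndsD l

lemma endsD_cons {c : C} {l : List C} (h : EndsD l) : EndsD (c :: l) := by
  obtain ⟨hne, hl⟩ := h
  exact ⟨by simp, by rwa [List.getLast_cons hne]⟩

lemma endsD_pair (c : C) {c' : C} (h : c'.1.2 = vd) : EndsD [c, c'] := by
  exact ⟨by simp, by simpa using h⟩

def rideL (n p A : ℕ) : List C :=
  if h : A < n then
    (((vx A p), (vy A p)), tu A p) :: (((vy A p), (vx (A+1) p)), tu A p + 1) :: rideL n p (A+1)
  else
    [(((vx A p), (vy A p)), tu A p), (((vy A p), vd), tu A p + 1)]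
termination_by n - A

def climbL (n p b : ℕ) : List C :=
  if h : b + 1 < p then
    (((vx p b), (vy p b)), tu p b + 1) :: (((vy p b), (vw p b)), tu p b + 2)
      :: (((vw p b), (vx p (b+1))), tu p (b+1)) :: climbL n p (b+1)
  else if h2 : p < n then
    (((vx p b), (vy p b)), tu p b + 1) :: (((vy p b), (vx (p+1) p)), tu p b + 2) :: rideL n p (p+1)
  else
    [(((vx p b), (vy p b)), tu p b + 1), (((vy p b), vd), tu p b + 2)]
termination_by p - b

def laneJ (n p : ℕ) : List C :=
  if p = 1 then ((vs, (vx 2 1)), 14) :: rideL n 1 2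
  else ((vs, (vx p 1)), tu p 1) :: climbL n p 1

lemma rideL_spec {n p : ℕ} (hp : 1 ≤ p) :
    ∀ A, p < A → A ≤ n →
      (∃ l', rideL n p A = (((vx A p), (vy A p)), tu A p) :: l') ∧
      Valid n (rideL n p A) ∧ List.Chain' Lk (rideL n p A) ∧ EndsD (rideL n p A) ∧
      (∀ c ∈ rideL n p A, InLane n p c.1) := by
  have main : ∀ m A, n - A = m → p < A → A ≤ n →
      (∃ l', rideL n p A = (((vx A p), (vy A p)), tu A p) :: l') ∧
      Valid n (rideL n p A) ∧ List.Chain' Lk (rideL n p A) ∧ EndsD (rideL n p A) ∧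
      (∀ c ∈ rideL n p A, InLane n p c.1) := by
    intro m
    induction m with
    | zero =>
      intro A hm hpA hAn
      have hAn' : A = n := by omega
      rw [rideL, dif_neg (by omega)]
      refine ⟨⟨_, rfl⟩, ?_, ?_, ?_, ?_⟩
      · intro c hc
        rcases List.mem_cons.mp hc with rfl | hc
        · simp only [CP, vx, vy]
          exact Or.inl ⟨trivial, trivial, trivial, trivial, hp, hpA, hAn, Or.inl trivial⟩
        rcases List.mem_cons.mp hc with rfl | hc
        · simp only [CP, vy, vd]
          exact Or.inr (Or.inr (Or.inr (Or.inr (Or.inr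
            ⟨trivial, hAn', hp, by omega, trivial, trivial, trivial, Or.inl (by rw [hAn'])⟩))))
        · simp at hc
      · refine List.isChain_cons_cons.mpr ⟨⟨rfl, by omega⟩, ?_⟩
        simp
      · exact endsD_pair _ rfl
      · intro c hc
        rcases List.mem_cons.mp hc with rfl | hc
        · simp only [InLane, vx, vy]; tauto
        rcases List.mem_cons.mp hc with rfl | hc
        · simp only [InLane, vy, vd]; tauto
        · simp at hc
    | succ m IH =>
      intro A hm hpA hAn
      by_cases hA : A < n
      case neg =>
        have hAn' : A = n := by omega
        omega
      rw [rideL, dif_pos hA]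
      obtain ⟨⟨l', hl'⟩, hval, hch, hend, hlane⟩ := IH (A+1) (by omega) (by omega) (by omega)
      refine ⟨⟨_, rfl⟩, ?_, ?_, ?_, ?_⟩
      · intro c hc
        rcases List.mem_cons.mp hc with rfl | hc
        · simp only [CP, vx, vy]
          exact Or.inl ⟨trivial, trivial, trivial, trivial, hp, hpA, hAn, Or.inl trivial⟩
        rcases List.mem_cons.mp hc with rfl | hc
        · simp only [CP, vy, vx]
          exact Or.inr (Or.inl ⟨trivial, trivial, hp, hpA, by omega, trivial, Or.inl ⟨trivial, trivial⟩⟩)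
        · exact hval c hc
      · refine List.isChain_cons_cons.mpr ⟨⟨rfl, by omega⟩, ?_⟩
        rw [hl']
        refine List.isChain_cons_cons.mpr ⟨⟨rfl, ?_⟩, by rw [← hl']; exact hch⟩
        have := tu_step (a := A) (b := p) (b' := p) (by omega) hp
        omega
      · exact endsD_cons (endsD_cons hend)
      · intro c hc
        rcases List.mem_cons.mp hc with rfl | hc
        · simp only [InLane, vx, vy]; tauto
        rcases List.mem_cons.mp hc with rfl | hc
        · simp only [InLane, vy, vx]; tauto
        · exact hlane c hc
  intro A hpA hAn
  exact main (n - A) A rfl hpA hAn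

lemma climbL_spec {n p : ℕ} (hpn : p ≤ n) :
    ∀ b, 1 ≤ b → b < p →
      (∃ l', climbL n p b = (((vx p b), (vy p b)), tu p b + 1) :: l') ∧
      Valid n (climbL n p b) ∧ List.Chain' Lk (climbL n p b) ∧ EndsD (climbL n p b) ∧
      (∀ c ∈ climbL n p b, InLane n p c.1) := by
  have main : ∀ m b, p - b = m → 1 ≤ b → b < p →
      (∃ l', climbL n p b = (((vx p b), (vy p b)), tu p b + 1) :: l') ∧
      Valid n (climbL n p b) ∧ List.Chain' Lk (climbL n p b) ∧ EndsD (climbL n p b) ∧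
      (∀ c ∈ climbL n p b, InLane n p c.1) := by
    intro m
    induction m with
    | zero => intro b hm hb1 hbp; omega
    | succ m IH =>
      intro b hm hb1 hbp
      by_cases hcase : b + 1 < p
      · -- climb step
        rw [climbL, dif_pos hcase]
        obtain ⟨⟨l', hl'⟩, hval, hch, hend, hlane⟩ := IH (b+1) (by omega) (by omega) (by omega)
        refine ⟨⟨_, rfl⟩, ?_, ?_, ?_, ?_⟩
        · intro c hc
          rcases List.mem_cons.mp hc with rfl | hc
          · simp only [CP, vx, vy]
            exact Or.inl ⟨trivial, trivial, trivial, trivial, hb1, hbp, hpn, Or.inr trivial⟩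
          rcases List.mem_cons.mp hc with rfl | hc
          · simp only [CP, vy, vw]
            exact Or.inr (Or.inr (Or.inl
              ⟨trivial, trivial, trivial, trivial, hb1, hcase, hpn, trivial⟩))
          rcases List.mem_cons.mp hc with rfl | hc
          · simp only [CP, vw, vx]
            exact Or.inr (Or.inr (Or.inr (Or.inl
              ⟨trivial, trivial, trivial, trivial, hb1, hcase, hpn, trivial⟩)))
          · exact hval c hc
        · refine List.isChain_cons_cons.mpr ⟨⟨rfl, by omega⟩, ?_⟩
          refine List.isChain_cons_cons.mpr ⟨⟨rfl, by rw [tu_succ]; omega⟩, ?_⟩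
          rw [hl']
          refine List.isChain_cons_cons.mpr ⟨⟨rfl, by omega⟩, by rw [← hl']; exact hch⟩
        · exact endsD_cons (endsD_cons (endsD_cons hend))
        · intro c hc
          rcases List.mem_cons.mp hc with rfl | hc
          · simp only [InLane, vx, vy]; tauto
          rcases List.mem_cons.mp hc with rfl | hc
          · simp only [InLane, vy, vw]; tauto
          rcases List.mem_cons.mp hc with rfl | hc
          · simp only [InLane, vw, vx]; tauto
          · exact hlane c hc
      · have hbp1 : b + 1 = p := by omega
        by_cases hpn' : p < n
        · -- diag then ride
          rw [climbL, dif_neg hcase, dif_pos hpn']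
          obtain ⟨⟨l', hl'⟩, hval, hch, hend, hlane⟩ :=
            rideL_spec (n := n) (p := p) (by omega) (p+1) (by omega) (by omega)
          refine ⟨⟨_, rfl⟩, ?_, ?_, ?_, ?_⟩
          · intro c hc
            rcases List.mem_cons.mp hc with rfl | hc
            · simp only [CP, vx, vy]
              exact Or.inl ⟨trivial, trivial, trivial, trivial, hb1, hbp, hpn, Or.inr trivial⟩
            rcases List.mem_cons.mp hc with rfl | hc
            · simp only [CP, vy, vx]
              exact Or.inr (Or.inl ⟨trivial, trivial, hb1, hbp, by omega, trivial,
                Or.inr ⟨hbp1, trivial, trivial⟩⟩)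
            · exact hval c hc
          · refine List.isChain_cons_cons.mpr ⟨⟨rfl, by omega⟩, ?_⟩
            rw [hl']
            refine List.isChain_cons_cons.mpr ⟨⟨rfl, ?_⟩, by rw [← hl']; exact hch⟩
            have := tu_step (a := p) (b := b) (b' := p) (by omega) (by omega)
            omega
          · exact endsD_cons (endsD_cons hend)
          · intro c hc
            rcases List.mem_cons.mp hc with rfl | hc
            · simp only [InLane, vx, vy]; tauto
            rcases List.mem_cons.mp hc with rfl | hc
            · simp only [InLane, vy, vx]; tauto
            · exact hlane c hc
        · -- p = n : top exit
          have hpn'' : p = n := by omega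
          rw [climbL, dif_neg hcase, dif_neg hpn']
          refine ⟨⟨_, rfl⟩, ?_, ?_, ?_, ?_⟩
          · intro c hc
            rcases List.mem_cons.mp hc with rfl | hc
            · simp only [CP, vx, vy]
              exact Or.inl ⟨trivial, trivial, trivial, trivial, hb1, hbp, hpn, Or.inr trivial⟩
            rcases List.mem_cons.mp hc with rfl | hc
            · simp only [CP, vy, vd]
              refine Or.inr (Or.inr (Or.inr (Or.inr (Or.inr
                ⟨trivial, hpn'', hb1, by omega, trivial, trivial, trivial,
                  Or.inr ⟨by omega, by rw [hpn'']⟩⟩))))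
            · simp at hc
          · refine List.isChain_cons_cons.mpr ⟨⟨rfl, by omega⟩, by simp⟩
          · exact endsD_pair _ rfl
          · intro c hc
            rcases List.mem_cons.mp hc with rfl | hc
            · simp only [InLane, vx, vy]; tauto
            rcases List.mem_cons.mp hc with rfl | hc
            · simp only [InLane, vy, vd]
              refine Or.inr (Or.inr (Or.inr (Or.inr (Or.inr ⟨trivial, trivial,
                Or.inr ⟨by omega, by omega⟩⟩))))
            · simp at hc
  intro b hb1 hbp
  exact main (p - b) b rfl hb1 hbp

lemma laneJ_spec {n p : ℕ} (hn : 3 ≤ n) (hp1 : 1 ≤ p) (hpn : p ≤ n) :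
    Valid n (laneJ n p) ∧ List.Chain' Lk (laneJ n p) ∧ laneJ n p ≠ [] ∧
    (∃ v t l', laneJ n p = ((vs, v), t) :: l') ∧ EndsD (laneJ n p) ∧
    (∀ c ∈ laneJ n p, InLane n p c.1) := by
  by_cases hp : p = 1
  · subst hp
    rw [laneJ, if_pos rfl]
    obtain ⟨⟨l', hl'⟩, hval, hch, hend, hlane⟩ :=
      rideL_spec (n := n) (p := 1) le_rfl 2 (by omega) (by omega)
    have htu21 : tu 2 1 = 15 := by norm_num [tu]
    refine ⟨?_, ?_, by simp, ⟨_, _, _, rfl⟩, endsD_cons hend, ?_⟩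
    · intro c hc
      rcases List.mem_cons.mp hc with rfl | hc
      · simp only [CP, vs, vx]
        exact Or.inr (Or.inr (Or.inr (Or.inr (Or.inl
          ⟨trivial, trivial, trivial, trivial, trivial, by omega, by omega,
            Or.inr ⟨trivial, trivial⟩⟩))))
      · exact hval c hc
    · rw [hl']
      exact List.isChain_cons_cons.mpr ⟨⟨rfl, by omega⟩, by rw [← hl']; exact hch⟩
    · intro c hc
      rcases List.mem_cons.mp hc with rfl | hc
      · simp only [InLane, vs, vx]; tauto
      · exact hlane c hc
  · rw [laneJ, if_neg hp]
    obtain ⟨⟨l', hl'⟩, hval, hch, hend, hlane⟩ :=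
      climbL_spec (n := n) (p := p) hpn 1 le_rfl (by omega)
    refine ⟨?_, ?_, by simp, ⟨_, _, _, rfl⟩, endsD_cons hend, ?_⟩
    · intro c hc
      rcases List.mem_cons.mp hc with rfl | hc
      · simp only [CP, vs, vx]
        exact Or.inr (Or.inr (Or.inr (Or.inr (Or.inl
          ⟨trivial, trivial, trivial, trivial, trivial, by omega, hpn, Or.inl trivial⟩))))
      · exact hval c hc
    · rw [hl']
      exact List.isChain_cons_cons.mpr ⟨⟨rfl, by omega⟩, by rw [← hl']; exact hch⟩
    · intro c hc
      rcases List.mem_cons.mp hc with rfl | hc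
      · simp only [InLane, vs, vx]; tauto
      · exact hlane c hc

lemma head_eq_of {l : List C} {c : C} {l' : List C} (h : l = c :: l') (hne : l ≠ []) :
    l.head hne = c := by subst h; rfl

lemma getLast_eq_of {l : List C} {c : C} {l' : List C} (h : l = c :: l') (hne : l ≠ []) :
    l.getLast hne = (c :: l').getLast (by simp) := by subst h; rfl

def laneJourney (n p : ℕ) (hn : 3 ≤ n) (hp1 : 1 ≤ p) (hpn : p ≤ n) : (G n).Journey vs vd where
  contacts := laneJ n p
  ne := (laneJ_spec hn hp1 hpn).2.2.1
  starts := by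
    obtain ⟨v, t, l', hl⟩ := (laneJ_spec hn hp1 hpn).2.2.2.1
    rw [head_eq_of hl ((laneJ_spec hn hp1 hpn).2.2.1)]
  ends := by
    obtain ⟨hne, he⟩ := (laneJ_spec hn hp1 hpn).2.2.2.2.1
    exact he
  valid := fun c hc => CP_contact ((laneJ_spec hn hp1 hpn).1 c hc)
  chain := (laneJ_spec hn hp1 hpn).2.1

lemma laneJourney_contacts {n p : ℕ} (hn : 3 ≤ n) (hp1 : 1 ≤ p) (hpn : p ≤ n) :
    (laneJourney n p hn hp1 hpn).contacts = laneJ n p := rfl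

/-- structure of the first contact of any journey -/
lemma journey_start {n : ℕ} (J : (G n).Journey vs vd) :
    ∃ p c rest, J.contacts = c :: rest ∧ c.1 = (vs, vx p 1) ∧ 2 ≤ p ∧ p ≤ n ∧
      (c.2 = tu p 1 ∨ (p = 2 ∧ c.2 = 14)) ∧
      StartsAt (vx p 1) c.2 rest ∧ Valid n rest ∧ List.Chain' Lk rest ∧ EndsD rest := by
  have hvalid : Valid n J.contacts := fun c hc => contact_iff.mp (J.valid c hc)
  obtain ⟨c, rest, hJ⟩ : ∃ c rest, J.contacts = c :: rest := by
    cases hl : J.contacts with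
    | nil => exact absurd hl J.ne
    | cons c rest => exact ⟨c, rest, rfl⟩
  have hstart : c.1.1 = vs := by
    have hs := J.starts
    rw [head_eq_of hJ J.ne] at hs
    exact hs
  have hcp : CP n c.1 c.2 := hvalid c (by rw [hJ]; exact List.mem_cons_self)
  obtain ⟨p, htgt, hp2, hpn, hslot⟩ := cp_from_s hcp hstart
  have hrest_ne : rest ≠ [] := by
    rintro rfl
    have hend := J.ends
    rw [getLast_eq_of hJ J.ne] at hend
    simp only [List.getLast_singleton] at hend
    rw [htgt] at hend
    simp [vx, vd] at hend
  obtain ⟨c₂, rest', hrest⟩ : ∃ c₂ rest', rest = c₂ :: rest' := by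
    cases hl : rest with
    | nil => exact absurd hl hrest_ne
    | cons c₂ rest' => exact ⟨c₂, rest', rfl⟩
  have hchain : List.Chain' Lk J.contacts := J.chain
  rw [hJ] at hchain
  have hlk : Lk c c₂ := by
    rw [hrest] at hchain
    exact (List.isChain_cons_cons.mp hchain).1
  have hendJ : EndsD J.contacts := ⟨J.ne, J.ends⟩
  rw [hJ] at hendJ
  refine ⟨p, c, rest, hJ, ?_, hp2, hpn, hslot, ?_, ?_, hchain.tail, endsD_tail hendJ hrest_ne⟩
  · have hceq : c.1 = (c.1.1, c.1.2) := rfl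
    rw [hceq, hstart, htgt]
  · rw [hrest]
    exact ⟨by rw [← hlk.1, htgt], hlk.2⟩
  · intro x hx
    exact hvalid x (by rw [hJ]; exact List.mem_cons_of_mem _ hx)


lemma disj_symm {δ : ℕ} {Gr : TVG VV} {s d : VV} {J J' : Gr.Journey s d}
    (h : DeltaDisjoint δ J J') : DeltaDisjoint δ J' J := by
  intro e t₁ t₂ h1 h2
  rw [Nat.dist_comm]
  exact h e t₂ t₁ h2 h1

lemma not_disjoint_aux {n δ : ℕ} (hδ : 2 ≤ δ) (J J' : (G n).Journey vs vd)
    {p q : ℕ} {c c' : C} {rest rest' : List C}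
    (hJc : J.contacts = c :: rest) (hce : c.1 = (vs, vx p 1)) (hp2 : 2 ≤ p) (hpn : p ≤ n)
    (hslot : c.2 = tu p 1 ∨ (p = 2 ∧ c.2 = 14))
    (hSt : StartsAt (vx p 1) c.2 rest) (hV : Valid n rest) (hC : List.Chain' Lk rest)
    (hE : EndsD rest)
    (hJc' : J'.contacts = c' :: rest') (hce' : c'.1 = (vs, vx q 1)) (hq2 : 2 ≤ q) (hqn : q ≤ n)
    (hslot' : c'.2 = tu q 1 ∨ (q = 2 ∧ c'.2 = 14))
    (hSt' : StartsAt (vx q 1) c'.2 rest') (hV' : Valid n rest') (hC' : List.Chain' Lk rest')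
    (hE' : EndsD rest')
    (hpq : p ≤ q) : ¬ DeltaDisjoint δ J J' := by
  intro hd
  rcases eq_or_lt_of_le hpq with rfl | hlt
  · -- same start edge
    have hu1 : J.uses (vs, vx p 1) c.2 := by
      show ((vs, vx p 1), c.2) ∈ J.contacts
      have : ((vs, vx p 1), c.2) = c := by rw [← hce]
      rw [this, hJc]
      exact List.mem_cons_self
    have hu2 : J'.uses (vs, vx p 1) c'.2 := by
      show ((vs, vx p 1), c'.2) ∈ J'.contacts
      have : ((vs, vx p 1), c'.2) = c' := by rw [← hce']
      rw [this, hJc']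
      exact List.mem_cons_self
    have hdist := hd _ _ _ hu1 hu2
    have htu : tu 2 1 = 15 := by norm_num [tu]
    simp only [Nat.dist] at hdist
    rcases hslot with h1 | ⟨hp2', h1⟩ <;> rcases hslot' with h2 | ⟨hq2', h2⟩
    · omega
    · rw [hq2'] at h1; omega
    · rw [hp2'] at h2; omega
    · omega
  · -- p < q : J' climbs full column q, J passes column q
    have hq3 : 3 ≤ q := by omega
    have hslotq : c'.2 = tu q 1 := by rcases hslot' with h | ⟨h, -⟩; exact h; omega
    have hforced := ((forced rest' hV' hC' hE' q 1 c'.2).1 hSt' (le_of_eq hslotq.symm)).1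
    have hcover := ((cover rest hV hC hE p 1 c.2).1 hSt q hpq hqn)
    obtain ⟨B, t, hmem, hB1, hBq⟩ := hcover
    have hhigh : HighHub rest' q B := hforced B hB1 hBq
    have hu1 : J.uses ((vx q B), (vy q B)) t := by
      show (((vx q B), (vy q B)), t) ∈ J.contacts
      rw [hJc]
      exact List.mem_cons_of_mem _ hmem
    have hu2 : J'.uses ((vx q B), (vy q B)) (tu q B + 1) := by
      show (((vx q B), (vy q B)), tu q B + 1) ∈ J'.contacts
      rw [hJc']
      exact List.mem_cons_of_mem _ hhigh
    have hcp : CP n (((vx q B), (vy q B)) : VV × VV) t := hV _ hmem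
    have hts : t = tu q B ∨ t = tu q B + 1 := (cp_from_x hcp rfl).2.2.2.2
    have hdist := hd _ _ _ hu1 hu2
    simp only [Nat.dist] at hdist
    omega

theorem journeys_conflict {n δ : ℕ} (hδ : 2 ≤ δ) (J J' : (G n).Journey vs vd) :
    ¬ DeltaDisjoint δ J J' := by
  obtain ⟨p, c, rest, hJc, hce, hp2, hpn, hslot, hSt, hV, hC, hE⟩ := journey_start J
  obtain ⟨q, c', rest', hJc', hce', hq2, hqn, hslot', hSt', hV', hC', hE'⟩ := journey_start J'
  rcases le_or_gt p q with hpq | hqp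
  · exact not_disjoint_aux hδ J J' hJc hce hp2 hpn hslot hSt hV hC hE
      hJc' hce' hq2 hqn hslot' hSt' hV' hC' hE' hpq
  · intro hd
    exact not_disjoint_aux hδ J' J hJc' hce' hq2 hqn hslot' hSt' hV' hC' hE'
      hJc hce hp2 hpn hslot hSt hV hC hE (le_of_lt hqp) (disj_symm hd)

theorem maxFlow_G {n δ : ℕ} (hδ : 2 ≤ δ) (hn : 3 ≤ n) : maxFlow (G n) vs vd δ = 1 := by
  have hJ : (G n).Journey vs vd := laneJourney n 1 hn le_rfl (by omega)
  have h1 : HasDisjointJourneys (G n) vs vd δ 1 :=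
    ⟨fun _ => hJ, fun i j hij => absurd (Subsingleton.elim i j) hij⟩
  have hub : ∀ m ∈ {m | HasDisjointJourneys (G n) vs vd δ m}, m ≤ 1 := by
    intro m hm
    by_contra hgt
    push_neg at hgt
    obtain ⟨Js, hdisj⟩ := hm
    have h01 : (⟨0, by omega⟩ : Fin m) ≠ ⟨1, by omega⟩ := by
      simp [Fin.ext_iff]
    exact journeys_conflict hδ _ _ (hdisj _ _ h01)
  exact le_antisymm (csSup_le ⟨1, h1⟩ hub) (le_csSup ⟨1, hub⟩ h1)

def cutF (j : ℕ) : Finset ((VV × VV) × ℕ) :=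
  insert ((vs, vx 2 1), 14)
    ((Finset.Icc 1 j).image
      (fun i => (((vx (2*i+1) (2*i)), (vy (2*i+1) (2*i))), tu (2*i+1) (2*i))))

lemma cutF_card (j : ℕ) : (cutF j).card = j + 1 := by
  rw [cutF, Finset.card_insert_of_notMem, Finset.card_image_of_injOn, Nat.card_Icc]
  · omega
  · intro i _ i' _ heq
    simp only [Prod.mk.injEq, vx, vy] at heq
    omega
  · intro hmem
    simp only [Finset.mem_image] at hmem
    obtain ⟨i, -, heq⟩ := hmem
    simp only [Prod.mk.injEq, vx, vs] at heq
    omega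

lemma cutF_cuts {δ j : ℕ} (hδ : 2 ≤ δ) (hj : 1 ≤ j) :
    IsCutSet (G (2*j+1)) vs vd δ (cutF j) := by
  intro J
  obtain ⟨p, c, rest, hJc, hce, hp2, hpn, hslot, hSt, hV, hC, hE⟩ := journey_start J
  by_cases hp : p = 2
  · refine ⟨c, by rw [hJc]; exact List.mem_cons_self, ((vs, vx 2 1), 14),
      Finset.mem_insert_self _ _, ?_, ?_, ?_⟩
    · rw [hce, hp]
    · show 14 ≤ c.2
      have htu : tu 2 1 = 15 := by norm_num [tu]
      rcases hslot with h | ⟨-, h⟩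
      · rw [hp] at h; omega
      · omega
    · show c.2 < 14 + δ
      have htu : tu 2 1 = 15 := by norm_num [tu]
      rcases hslot with h | ⟨-, h⟩
      · rw [hp] at h; omega
      · omega
  · have hp3 : 3 ≤ p := by omega
    have hslotp : c.2 = tu p 1 := by rcases hslot with h | ⟨h, -⟩; exact h; omega
    have hforced := ((forced rest hV hC hE p 1 c.2).1 hSt (le_of_eq hslotp.symm))
    rcases Nat.even_or_odd p with ⟨i, hi⟩ | ⟨i, hi⟩
    · -- p = 2i even, use hub (p+1, p)
      have hiodd : p = 2*i := by omega
      have hin : 2*i+1 ≤ 2*j+1 := by omega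
      obtain ⟨t, hmem⟩ := hforced.2 (by omega)
      have hcp : CP (2*j+1) (((vx (p+1) p), (vy (p+1) p)) : VV × VV) t := hV _ hmem
      have hts : t = tu (p+1) p ∨ t = tu (p+1) p + 1 := (cp_from_x hcp rfl).2.2.2.2
      refine ⟨(((vx (p+1) p), (vy (p+1) p)), t), by rw [hJc]; exact List.mem_cons_of_mem _ hmem,
        (((vx (2*i+1) (2*i)), (vy (2*i+1) (2*i))), tu (2*i+1) (2*i)),
        Finset.mem_insert_of_mem (Finset.mem_image.mpr ⟨i, Finset.mem_Icc.mpr ⟨by omega, by omega⟩, rfl⟩),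
        ?_, ?_, ?_⟩
      · show (((vx (p+1) p), (vy (p+1) p)) : VV × VV) = ((vx (2*i+1) (2*i)), (vy (2*i+1) (2*i)))
        rw [hiodd]
      · show tu (2*i+1) (2*i) ≤ t
        have h2 : tu (2*i+1) (2*i) = tu (p+1) p := by rw [hiodd]
        omega
      · show t < tu (2*i+1) (2*i) + δ
        have h2 : tu (2*i+1) (2*i) = tu (p+1) p := by rw [hiodd]
        omega
    · -- p = 2i+1 odd, use high hub (p, p-1) = (2i+1, 2i)
      have hpi : p = 2*i+1 := by omega
      have hhigh : HighHub rest p (2*i) := hforced.1 (2*i) (by omega) (by omega)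
      refine ⟨(((vx p (2*i)), (vy p (2*i))), tu p (2*i) + 1),
        by rw [hJc]; exact List.mem_cons_of_mem _ hhigh,
        (((vx (2*i+1) (2*i)), (vy (2*i+1) (2*i))), tu (2*i+1) (2*i)),
        Finset.mem_insert_of_mem (Finset.mem_image.mpr ⟨i, Finset.mem_Icc.mpr ⟨by omega, by omega⟩, rfl⟩),
        ?_, ?_, ?_⟩
      · show (((vx p (2*i)), (vy p (2*i))) : VV × VV) = ((vx (2*i+1) (2*i)), (vy (2*i+1) (2*i)))
        rw [hpi]
      · show tu (2*i+1) (2*i) ≤ tu p (2*i) + 1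
        rw [hpi]; omega
      · show tu p (2*i) + 1 < tu (2*i+1) (2*i) + δ
        rw [hpi]; omega

lemma exists_untouched (n : ℕ) (F : Finset ((VV × VV) × ℕ)) (h : 2 * F.card < n) :
    ∃ p, 1 ≤ p ∧ p ≤ n ∧ ∀ f ∈ F, ¬ InLane n p f.1 := by
  classical
  set touched := F.biUnion (fun f => (Finset.Icc 1 n).filter (fun q => InLane n q f.1)) with htouched
  have hcard2 : ∀ f ∈ F, ((Finset.Icc 1 n).filter (fun q => InLane n q f.1)).card ≤ 2 := by
    intro f _
    by_contra hgt
    push_neg at hgt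
    obtain ⟨a, b, c, ha, hb, hc, hab, hac, hbc⟩ := Finset.two_lt_card_iff.mp hgt
    have hA := (Finset.mem_filter.mp ha).2
    have hB := (Finset.mem_filter.mp hb).2
    have hC := (Finset.mem_filter.mp hc).2
    rcases lane_le2 hA hB hC with h | h | h <;> tauto
  have hsub : touched.card ≤ 2 * F.card := by
    calc touched.card
        ≤ ∑ f ∈ F, ((Finset.Icc 1 n).filter (fun q => InLane n q f.1)).card :=
          Finset.card_biUnion_le
      _ ≤ ∑ _f ∈ F, 2 := Finset.sum_le_sum hcard2
      _ = 2 * F.card := by rw [Finset.sum_const, smul_eq_mul, mul_comm]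
  have hex : ∃ p ∈ Finset.Icc 1 n, p ∉ touched := by
    by_contra hno
    push_neg at hno
    have hsubset : Finset.Icc 1 n ⊆ touched := fun p hp => hno p hp
    have := Finset.card_le_card hsubset
    rw [Nat.card_Icc] at this
    omega
  obtain ⟨p, hp, hnt⟩ := hex
  have hp' := Finset.mem_Icc.mp hp
  refine ⟨p, hp'.1, hp'.2, fun f hf hl => hnt ?_⟩
  exact Finset.mem_biUnion.mpr ⟨f, hf, Finset.mem_filter.mpr ⟨hp, hl⟩⟩

lemma cut_lower {δ j : ℕ} (hj : 1 ≤ j) (F : Finset ((VV × VV) × ℕ)) (hcard : F.card ≤ j) :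
    ¬ IsCutSet (G (2*j+1)) vs vd δ F := by
  obtain ⟨p, hp1, hpn, hunt⟩ := exists_untouched (2*j+1) F (by omega)
  intro hcut
  obtain ⟨c, hcmem, f, hf, hkill⟩ := hcut (laneJourney (2*j+1) p (by omega) hp1 hpn)
  rw [laneJourney_contacts] at hcmem
  have hlane : InLane (2*j+1) p c.1 :=
    ((laneJ_spec (by omega : 3 ≤ 2*j+1) hp1 hpn).2.2.2.2.2) c hcmem
  rw [hkill.1] at hlane
  exact hunt f hf hlane

theorem minCut_G {δ j : ℕ} (hδ : 2 ≤ δ) (hj : 1 ≤ j) :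
    minCut (G (2*j+1)) vs vd δ = j + 1 := by
  apply le_antisymm
  · exact Nat.sInf_le ⟨cutF j, cutF_card j, cutF_cuts hδ hj⟩
  · refine le_csInf ⟨j+1, cutF j, cutF_card j, cutF_cuts hδ hj⟩ ?_
    rintro m ⟨F, hFcard, hFcut⟩
    by_contra hlt
    push_neg at hlt
    exact cut_lower hj F (by omega) hFcut

/-! ### the trivial graph for `k = 1` -/

def G1 : TVG VV := ⟨{(vs, vd)}, 1, fun e t => decide (e = (vs, vd) ∧ t = 1)⟩

lemma G1_contact {e : VV × VV} {t : ℕ} (h : G1.Contact e t) : e = (vs, vd) ∧ t = 1 := by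
  obtain ⟨-, -, -, hρ⟩ := h
  simpa only [G1, decide_eq_true_eq] using hρ

def J1 : G1.Journey vs vd where
  contacts := [((vs, vd), 1)]
  ne := by simp
  starts := rfl
  ends := rfl
  valid := by
    intro c hc
    simp only [List.mem_singleton] at hc
    subst hc
    refine ⟨by simp [G1], le_rfl, le_rfl, ?_⟩
    simp [G1]
  chain := List.isChain_singleton _

lemma G1_contacts (J : G1.Journey vs vd) : J.contacts = [((vs, vd), 1)] := by
  have hall : ∀ c ∈ J.contacts, c = ((vs, vd), 1) := by
    intro c hc
    obtain ⟨he, ht⟩ := G1_contact (J.valid c hc)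
    have : c = (c.1, c.2) := rfl
    rw [this, he, ht]
  obtain ⟨c, rest, hJ⟩ : ∃ c rest, J.contacts = c :: rest := by
    cases hl : J.contacts with
    | nil => exact absurd hl J.ne
    | cons c rest => exact ⟨c, rest, rfl⟩
  have hc1 : c = ((vs, vd), 1) := hall c (by rw [hJ]; exact List.mem_cons_self)
  cases hr : rest with
  | nil => rw [hJ, hc1, hr]
  | cons c₂ rest' =>
    exfalso
    have hchain := J.chain
    rw [hJ, hr] at hchain
    have hlk := (List.isChain_cons_cons.mp hchain).1
    have hc2 : c₂ = ((vs, vd), 1) :=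
      hall c₂ (by rw [hJ, hr]; exact List.mem_cons_of_mem _ (List.mem_cons_self))
    rw [hc1, hc2] at hlk
    exact absurd hlk.2 (by norm_num)

theorem maxFlow_G1 {δ : ℕ} (hδ : 2 ≤ δ) : maxFlow G1 vs vd δ = 1 := by
  have h1 : HasDisjointJourneys G1 vs vd δ 1 :=
    ⟨fun _ => J1, fun i j hij => absurd (Subsingleton.elim i j) hij⟩
  have hub : ∀ m ∈ {m | HasDisjointJourneys G1 vs vd δ m}, m ≤ 1 := by
    intro m hm
    by_contra hgt
    push_neg at hgt
    obtain ⟨Js, hdisj⟩ := hm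
    have h01 : (⟨0, by omega⟩ : Fin m) ≠ ⟨1, by omega⟩ := by simp [Fin.ext_iff]
    have hd := hdisj _ _ h01
    have hu : ∀ (J : G1.Journey vs vd), J.uses (vs, vd) 1 := by
      intro J
      show ((vs, vd), 1) ∈ J.contacts
      rw [G1_contacts J]
      exact List.mem_cons_self
    have := hd _ _ _ (hu _) (hu _)
    simp [Nat.dist] at this
    omega
  exact le_antisymm (csSup_le ⟨1, h1⟩ hub) (le_csSup ⟨1, hub⟩ h1)

theorem minCut_G1 {δ : ℕ} (hδ : 2 ≤ δ) : minCut G1 vs vd δ = 1 := by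
  have hcut : IsCutSet G1 vs vd δ {((vs, vd), 1)} := by
    intro J
    refine ⟨((vs, vd), 1), by rw [G1_contacts J]; exact List.mem_cons_self,
      ((vs, vd), 1), Finset.mem_singleton_self _, rfl, le_rfl, by omega⟩
  apply le_antisymm
  · exact Nat.sInf_le ⟨{((vs, vd), 1)}, Finset.card_singleton _, hcut⟩
  · refine le_csInf ⟨1, {((vs, vd), 1)}, Finset.card_singleton _, hcut⟩ ?_
    rintro m ⟨F, hFcard, hFcut⟩
    by_contra hlt
    push_neg at hlt
    have hm0 : m = 0 := by omega
    rw [hm0] at hFcard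
    obtain ⟨c, -, f, hf, -⟩ := hFcut J1
    rw [Finset.card_eq_zero.mp hFcard] at hf
    exact absurd hf (Finset.notMem_empty f)
end Gap

/-- For every `δ ≥ 2` and `k ≥ 1` there is a time-varying graph with a
source-destination pair whose `MaxFlow_δ` is `1` while `MinCut_δ` is `k`; hence the
gap ratio `MinCut_δ / MaxFlow_δ` can be arbitrarily large. -/
theorem menger_gap_unbounded :
    ∀ δ : ℕ, 2 ≤ δ → ∀ k : ℕ, 1 ≤ k →
      ∃ (V : Type) (G : TVG V) (s d : V),
        maxFlow G s d δ = 1 ∧ minCut G s d δ = k := by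
  intro δ hδ k hk
  rcases eq_or_lt_of_le hk with h1 | h2
  · exact ⟨Gap.VV, Gap.G1, Gap.vs, Gap.vd, Gap.maxFlow_G1 hδ,
      by rw [Gap.minCut_G1 hδ, h1]⟩
  · refine ⟨Gap.VV, Gap.G (2*(k-1)+1), Gap.vs, Gap.vd,
      Gap.maxFlow_G hδ (by omega), ?_⟩
    rw [Gap.minCut_G hδ (by omega)]
    omega
end

section
/- Each journey J output by the greedy algorithm for δ-MAXFLOW interferes with at most 2k journeys of any fixed collection of pairwise δ-disjoint journeys, where k is the number of contacts of J; more precisely, a journey with k contacts has each contact interfering with at most 2 journeys of any δ-disjoint collection, so J interferes with at most 2k journeys of the collection. -/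
variable {V : Type}

/-- `(e,t)` is an interfering contact of journey `J`: `J` uses edge `e` at some slot
`t'` with `|t - t'| < δ`. -/
def Interferes {G : TVG V} {s d : V} (δ : ℕ) (J : G.Journey s d)
    (c : (V × V) × ℕ) : Prop :=
  ∃ t', J.uses c.1 t' ∧ Nat.dist c.2 t' < δ

open Classical in
/-- Each contact interferes with at most `2` journeys of any pairwise `δ`-disjoint
collection; hence a journey with `k` contacts interferes with at most `2k` journeys
of the collection. -/
theorem interference_bound (G : TVG V) (s d : V) (δ m : ℕ) (hδ : 1 ≤ δ)
    (Js : Fin m → G.Journey s d)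
    (hdisj : ∀ i j, i ≠ j → DeltaDisjoint δ (Js i) (Js j))
    (J : G.Journey s d) :
    (∀ c : (V × V) × ℕ,
      (Finset.univ.filter fun i : Fin m => Interferes δ (Js i) c).card ≤ 2) ∧
    (Finset.univ.filter fun i : Fin m =>
        ∃ c ∈ J.contacts, Interferes δ (Js i) c).card ≤ 2 * J.contacts.length := by
  have key : ∀ c : (V × V) × ℕ,
      (Finset.univ.filter fun i : Fin m => Interferes δ (Js i) c).card ≤ 2 := by
    intro c
    by_contra h
    push_neg at h
    rw [Finset.two_lt_card] at h
    obtain ⟨i, hi, j, hj, k, hk, hij, hik, hjk⟩ := h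
    rw [Finset.mem_filter] at hi hj hk
    simp only [Finset.mem_filter, Finset.mem_univ, true_and, Interferes] at hi hj hk
    obtain ⟨ti, hti, dti⟩ := hi
    obtain ⟨tj, htj, dtj⟩ := hj
    obtain ⟨tk, htk, dtk⟩ := hk
    have d1 := hdisj i j hij c.1 ti tj hti htj
    have d2 := hdisj i k hik c.1 ti tk hti htk
    have d3 := hdisj j k hjk c.1 tj tk htj htk
    simp only [Nat.dist] at d1 d2 d3 dti dtj dtk
    omega
  refine ⟨key, ?_⟩
  have hsub : (Finset.univ.filter fun i : Fin m =>
      ∃ c ∈ J.contacts, Interferes δ (Js i) c) ⊆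
      J.contacts.toFinset.biUnion
        (fun c => Finset.univ.filter fun i : Fin m => Interferes δ (Js i) c) := by
    intro i hi
    simp only [Finset.mem_filter, Finset.mem_univ, true_and, Finset.mem_biUnion,
      List.mem_toFinset] at *
    obtain ⟨c, hc, hint⟩ := hi
    exact ⟨c, hc, hint⟩
  calc (Finset.univ.filter fun i : Fin m =>
        ∃ c ∈ J.contacts, Interferes δ (Js i) c).card
      ≤ (J.contacts.toFinset.biUnion
          (fun c => Finset.univ.filter fun i : Fin m => Interferes δ (Js i) c)).card :=
        Finset.card_le_card hsub
    _ ≤ ∑ c ∈ J.contacts.toFinset,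
          (Finset.univ.filter fun i : Fin m => Interferes δ (Js i) c).card :=
        Finset.card_biUnion_le
    _ ≤ ∑ _c ∈ J.contacts.toFinset, 2 := Finset.sum_le_sum (fun c _ => key c)
    _ = 2 * J.contacts.toFinset.card := by rw [Finset.sum_const, smul_eq_mul, mul_comm]
    _ ≤ 2 * J.contacts.length := by
        have := J.contacts.toFinset_card_le
        omega
end

section
/- The greedy algorithm for finding δ-disjoint journeys achieves an O(√(|E|·(T/δ+1)))-approximation of MaxFlow_δ; specifically if the greedy output has m≥1 journeys and the optimum is m*, then m* < (3·√(|E|(T/δ+1)) + 2)·m. -/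
variable {V : Type}

section GreedyAuxiliary

variable {V : Type} {G : TVG V} {s d : V}

private lemma head_congr' {α : Type*} {l l' : List α} (h : l = l') (h1 : l ≠ []) (h2 : l' ≠ []) :
    l.head h1 = l'.head h2 := by subst h; rfl

private lemma getLast_congr' {α : Type*} {l l' : List α} (h : l = l') (h1 : l ≠ []) (h2 : l' ≠ []) :
    l.getLast h1 = l'.getLast h2 := by subst h; rfl

private lemma head_mid {α : Type*} (l₁ : List α) (c : α) (X Y : List α) (hX) (hY) :
    (l₁ ++ c :: X).head hX = (l₁ ++ c :: Y).head hY := by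
  cases l₁ <;> simp

private lemma exists_dup_split (l : List ((V × V) × ℕ)) (h : ¬ (l.map Prod.fst).Nodup) :
    ∃ l₁ c₁ l₂ c₂ l₃, l = l₁ ++ c₁ :: (l₂ ++ c₂ :: l₃) ∧ (c₁ : (V × V) × ℕ).1 = c₂.1 := by
  induction l with
  | nil => simp at h
  | cons c t ih =>
    by_cases hc : c.1 ∈ t.map Prod.fst
    · obtain ⟨c₂, hc₂t, hc₂⟩ := List.mem_map.mp hc
      obtain ⟨l₂, l₃, rfl⟩ := List.append_of_mem hc₂t
      exact ⟨[], c, l₂, c₂, l₃, by simp, hc₂.symm⟩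
    · have ht : ¬ (t.map Prod.fst).Nodup := fun hn =>
        h (by rw [List.map_cons, List.nodup_cons]; exact ⟨hc, hn⟩)
      obtain ⟨l₁, c₁, l₂, c₂, l₃, rfl, he⟩ := ih ht
      exact ⟨c :: l₁, c₁, l₂, c₂, l₃, by simp, he⟩

private lemma times_pairwise (K : G.Journey s d) :
    K.contacts.Pairwise fun a b => a.2 < b.2 := by
  haveI : IsTrans ((V × V) × ℕ) (fun a b => a.2 < b.2) := ⟨fun a b c h h' => h.trans h'⟩
  exact List.isChain_iff_pairwise.mp (K.chain.imp fun a b h => h.2)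

/-- Every journey admits a "shortcut" journey whose contacts form a subset and whose
edges are pairwise distinct. -/
private lemma exists_nodup_journey (K : G.Journey s d) :
    ∃ K' : G.Journey s d, (∀ c ∈ K'.contacts, c ∈ K.contacts) ∧
      (K'.contacts.map Prod.fst).Nodup := by
  suffices H : ∀ n (K : G.Journey s d), K.contacts.length = n →
      ∃ K' : G.Journey s d, (∀ c ∈ K'.contacts, c ∈ K.contacts) ∧
        (K'.contacts.map Prod.fst).Nodup from H _ K rfl
  intro n
  induction n using Nat.strong_induction_on with
  | _ n ih =>
    intro K hn
    by_cases hd : (K.contacts.map Prod.fst).Nodup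
    · exact ⟨K, fun c hc => hc, hd⟩
    obtain ⟨l₁, c₁, l₂, c₂, l₃, hl, he⟩ := exists_dup_split K.contacts hd
    have hpw := times_pairwise K
    have hch := K.chain
    rw [hl] at hpw hch
    have hc12 : c₁.2 < c₂.2 := by
      have h1 := (List.pairwise_append.mp hpw).2.1
      exact (List.pairwise_cons.mp h1).1 c₂ (by simp)
    obtain ⟨hch1, hch2, hlink⟩ := List.isChain_append.mp hch
    obtain ⟨-, hch3⟩ := List.isChain_cons.mp hch2
    obtain ⟨-, hch4, -⟩ := List.isChain_append.mp hch3
    obtain ⟨h7, h6⟩ := List.isChain_cons.mp hch4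
    have hne' : l₁ ++ c₁ :: l₃ ≠ [] := by simp
    have hstart : ((l₁ ++ c₁ :: l₃).head hne').1.1 = s := by
      rw [head_mid l₁ c₁ l₃ (l₂ ++ c₂ :: l₃) hne' (by simp),
        ← head_congr' hl K.ne (by simp)]
      exact K.starts
    have hend : ((l₁ ++ c₁ :: l₃).getLast hne').1.2 = d := by
      have hKe := K.ends
      rw [getLast_congr' hl K.ne (by simp)] at hKe
      rw [List.getLast_append_of_right_ne_nil l₁ (c₁ :: (l₂ ++ c₂ :: l₃)) (by simp)] at hKe
      rw [getLast_congr' (show c₁ :: (l₂ ++ c₂ :: l₃) = (c₁ :: l₂) ++ c₂ :: l₃ by simp)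
        (by simp) (by simp)] at hKe
      rw [List.getLast_append_of_right_ne_nil (c₁ :: l₂) (c₂ :: l₃) (by simp)] at hKe
      rw [List.getLast_append_of_right_ne_nil l₁ (c₁ :: l₃) (by simp)]
      cases l₃ with
      | nil =>
        simp only [List.getLast_singleton'] at hKe ⊢
        rw [show c₁.1 = c₂.1 from he]
        exact hKe
      | cons a t =>
        rw [List.getLast_cons (List.cons_ne_nil a t)] at hKe
        rw [List.getLast_cons (List.cons_ne_nil a t)]
        exact hKe
    have hvalid2 : ∀ c ∈ l₁ ++ c₁ :: l₃, G.Contact c.1 c.2 := by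
      intro c hc
      apply K.valid
      rw [hl]
      simp only [List.mem_append, List.mem_cons] at hc ⊢
      tauto
    have hchain2 : List.Chain' (fun a b => a.1.2 = b.1.1 ∧ a.2 < b.2) (l₁ ++ c₁ :: l₃) := by
      refine List.isChain_append.mpr ⟨hch1, ?_, ?_⟩
      · refine List.isChain_cons.mpr ⟨fun y hy => ?_, h6⟩
        refine ⟨?_, hc12.trans (h7 y hy).2⟩
        rw [show c₁.1 = c₂.1 from he]
        exact (h7 y hy).1
      · intro x hx y hy
        exact hlink x hx y (by simpa using hy)
    have hlen : (l₁ ++ c₁ :: l₃).length < n := by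
      rw [hl] at hn
      simp only [List.length_append, List.length_cons] at hn ⊢
      omega
    obtain ⟨K', hsub, hnd⟩ :=
      ih _ hlen ⟨l₁ ++ c₁ :: l₃, hne', hstart, hend, hvalid2, hchain2⟩ rfl
    refine ⟨K', fun c hc => ?_, hnd⟩
    have hmem : c ∈ l₁ ++ c₁ :: l₃ := hsub c hc
    rw [hl]
    simp only [List.mem_append, List.mem_cons] at hmem ⊢
    tauto

end GreedyAuxiliary


/-- Approximation guarantee of the greedy algorithm for `δ`-MAXFLOW: if the greedy
algorithm (always picking an `s`-`d` journey with the fewest contacts among those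
avoiding the interfering contacts of the previously chosen journeys, until no such
journey remains) outputs `m ≥ 1` journeys, then every number `m'` of pairwise
`δ`-disjoint journeys satisfies `m' < (3·√(|E|(T/δ+1)) + 2)·m`. -/
theorem greedy_approximation (G : TVG V) (s d : V) (δ m : ℕ)
    (hδ : 1 ≤ δ) (hδT : δ ≤ G.T) (hm : 1 ≤ m)
    (Js : Fin m → G.Journey s d)
    (hvalid : ∀ i j : Fin m, i < j → ∀ c ∈ (Js j).contacts, ¬ Interferes δ (Js i) c)
    (hmin : ∀ j : Fin m, ∀ J' : G.Journey s d,
      (∀ i : Fin m, i < j → ∀ c ∈ J'.contacts, ¬ Interferes δ (Js i) c) →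
      (Js j).contacts.length ≤ J'.contacts.length)
    (hterm : ∀ J' : G.Journey s d, ∃ i : Fin m, ∃ c ∈ J'.contacts, Interferes δ (Js i) c)
    (m' : ℕ) (hopt : HasDisjointJourneys G s d δ m') :
    (m' : ℝ) < (3 * Real.sqrt ((G.E.card : ℝ) * ((G.T : ℝ) / (δ : ℝ) + 1)) + 2) * m := by
  classical
  obtain ⟨Ks, hKs⟩ := hopt
  set Cr : ℝ := (G.E.card : ℝ) * ((G.T : ℝ) / (δ : ℝ) + 1) with hCrdef
  set L : ℝ := Real.sqrt Cr with hLdef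
  have hδ0 : (0 : ℝ) < (δ : ℝ) := by exact_mod_cast hδ
  have hE1 : 1 ≤ G.E.card := by
    have h0 := Js ⟨0, hm⟩
    have hmem := h0.valid _ (List.head_mem h0.ne)
    exact Finset.card_pos.mpr ⟨_, hmem.1⟩
  have hT1 : (1 : ℝ) ≤ (G.T : ℝ) / (δ : ℝ) := by
    rw [le_div_iff₀ hδ0, one_mul]
    exact_mod_cast hδT
  have hCr2 : (2 : ℝ) ≤ Cr := by
    have hE1' : (1 : ℝ) ≤ (G.E.card : ℝ) := by exact_mod_cast hE1
    have h2 : (2 : ℝ) ≤ (G.T : ℝ) / (δ : ℝ) + 1 := by linarith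
    calc (2 : ℝ) ≤ (G.T : ℝ) / (δ : ℝ) + 1 := h2
    _ = 1 * ((G.T : ℝ) / (δ : ℝ) + 1) := (one_mul _).symm
    _ ≤ (G.E.card : ℝ) * ((G.T : ℝ) / (δ : ℝ) + 1) := by
        apply mul_le_mul_of_nonneg_right hE1' (by linarith)
  have hL1 : (1 : ℝ) ≤ L := by
    rw [hLdef, show (1 : ℝ) = Real.sqrt 1 from Real.sqrt_one.symm]
    exact Real.sqrt_le_sqrt (by linarith)
  have hL0 : (0 : ℝ) < L := lt_of_lt_of_le one_pos hL1
  -- the first greedy journey each optimal journey interferes with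
  have hq : ∀ k : Fin m', ∃ nn : ℕ, ∃ h : nn < m,
      ∃ c ∈ (Ks k).contacts, Interferes δ (Js ⟨nn, h⟩) c := by
    intro k
    obtain ⟨i, c, hc, hic⟩ := hterm (Ks k)
    exact ⟨i.1, i.2, c, hc, hic⟩
  let f : Fin m' → Fin m := fun k => ⟨Nat.find (hq k), (Nat.find_spec (hq k)).choose⟩
  have hfspec : ∀ k, ∃ c ∈ (Ks k).contacts, Interferes δ (Js (f k)) c := fun k =>
    (Nat.find_spec (hq k)).choose_spec
  have hfmin : ∀ k : Fin m', ∀ j : Fin m, j < f k →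
      ¬ ∃ c ∈ (Ks k).contacts, Interferes δ (Js j) c := by
    intro k j hj hcon
    exact Nat.find_min (hq k) (show j.1 < Nat.find (hq k) from hj) ⟨j.2, hcon⟩
  -- chosen interfering contact and time
  let cc : Fin m' → (V × V) × ℕ := fun k => (hfspec k).choose
  have hcc1 : ∀ k, cc k ∈ (Ks k).contacts := fun k => (hfspec k).choose_spec.1
  have hcc2 : ∀ k, Interferes δ (Js (f k)) (cc k) := fun k => (hfspec k).choose_spec.2
  let tt : Fin m' → ℕ := fun k => (hcc2 k).choose
  have htt1 : ∀ k, (Js (f k)).uses (cc k).1 (tt k) := fun k => (hcc2 k).choose_spec.1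
  have htt2 : ∀ k, Nat.dist (cc k).2 (tt k) < δ := fun k => (hcc2 k).choose_spec.2
  have hcardsum : (Finset.univ : Finset (Fin m')).card =
      ∑ i : Fin m, (Finset.univ.filter fun k => f k = i).card :=
    Finset.card_eq_sum_card_fiberwise fun k _ => Finset.mem_univ (f k)
  -- per-fiber bound
  have hfiber : ∀ i : Fin m,
      (((Finset.univ.filter fun k => f k = i).card : ℕ) : ℝ) ≤ 2 * L := by
    intro i
    set S : Finset (Fin m') := Finset.univ.filter fun k => f k = i with hSdef
    have hSf : ∀ k ∈ S, f k = i := fun k hk => (Finset.mem_filter.mp hk).2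
    by_cases hcase : ((Js i).contacts.length : ℝ) ≤ L
    · -- short greedy journey: at most two optimal journeys per contact
      have hmaps : ∀ k ∈ S, (((cc k).1, tt k), decide ((cc k).2 ≤ tt k)) ∈
          (Js i).contacts.toFinset ×ˢ (Finset.univ : Finset Bool) := by
        intro k hk
        refine Finset.mem_product.mpr ⟨List.mem_toFinset.mpr ?_, Finset.mem_univ _⟩
        have h1 := htt1 k
        rw [hSf k hk] at h1
        exact h1
      have hinj : Set.InjOn (fun k => (((cc k).1, tt k), decide ((cc k).2 ≤ tt k)))
          (S : Set (Fin m')) := by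
        intro k hk k' hk' hgg
        by_contra hne
        simp only [Prod.mk.injEq] at hgg
        obtain ⟨⟨h1, h2⟩, h3⟩ := hgg
        have hu1 : (Ks k).uses (cc k).1 (cc k).2 := hcc1 k
        have hu2 : (Ks k').uses (cc k).1 (cc k').2 := by
          rw [h1]; exact hcc1 k'
        have hdisj := hKs k k' hne (cc k).1 (cc k).2 (cc k').2 hu1 hu2
        have hd1 : (cc k).2 - tt k + (tt k - (cc k).2) < δ := htt2 k
        have hd2 : (cc k').2 - tt k' + (tt k' - (cc k').2) < δ := htt2 k'
        have hd3 : δ ≤ (cc k).2 - (cc k').2 + ((cc k').2 - (cc k).2) := hdisj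
        rw [← h2] at hd2
        rw [← h2] at h3
        have h4 : ((cc k).2 ≤ tt k) ↔ ((cc k').2 ≤ tt k) := decide_eq_decide.mp h3
        rcases le_or_gt (cc k).2 (tt k) with h5 | h5
        · have h6 := h4.mp h5
          omega
        · have h6 : ¬ ((cc k').2 ≤ tt k) := fun hh => h5.not_ge (h4.mpr hh)
          omega
      have hcard := Finset.card_le_card_of_injOn _ hmaps hinj
      rw [Finset.card_product] at hcard
      have htf : (Js i).contacts.toFinset.card ≤ (Js i).contacts.length :=
        (Js i).contacts.toFinset_card_le
      have hBu : (Finset.univ : Finset Bool).card = 2 := by simp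
      have h2 : S.card ≤ (Js i).contacts.length * 2 := by
        rw [hBu] at hcard
        exact le_trans hcard (Nat.mul_le_mul_right 2 htf)
      calc (S.card : ℝ) ≤ ((Js i).contacts.length : ℝ) * 2 := by exact_mod_cast h2
      _ ≤ L * 2 := mul_le_mul_of_nonneg_right hcase (by norm_num)
      _ = 2 * L := mul_comm _ _
    · -- long greedy journey: optimal journeys in this fiber use many distinct edges
      push_neg at hcase
      have hlong : ∀ k ∈ S,
          (Js i).contacts.length ≤ ((Ks k).contacts.map Prod.fst).toFinset.card := by
        intro k hk
        obtain ⟨K', hsub, hnd⟩ := exists_nodup_journey (Ks k)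
        have havoid : ∀ i' : Fin m, i' < i → ∀ c ∈ K'.contacts, ¬ Interferes δ (Js i') c := by
          intro i' hi' c hc hint
          exact hfmin k i' (by rw [hSf k hk]; exact hi') ⟨c, hsub c hc, hint⟩
        have hmin' := hmin i K' havoid
        have hsubE : (K'.contacts.map Prod.fst).toFinset ⊆
            ((Ks k).contacts.map Prod.fst).toFinset := by
          intro e he'
          simp only [List.mem_toFinset, List.mem_map] at he' ⊢
          obtain ⟨c, hc, rfl⟩ := he'
          exact ⟨c, hsub c hc, rfl⟩
        calc (Js i).contacts.length ≤ K'.contacts.length := hmin'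
        _ = (K'.contacts.map Prod.fst).length := (List.length_map _).symm
        _ = (K'.contacts.map Prod.fst).toFinset.card := (List.toFinset_card_of_nodup hnd).symm
        _ ≤ ((Ks k).contacts.map Prod.fst).toFinset.card := Finset.card_le_card hsubE
      set B : ℕ := (G.T - 1) / δ + 1 with hBdef
      -- each edge is used by at most B journeys of the optimal family
      have hedge : ∀ e : V × V,
          (S.filter fun k => e ∈ ((Ks k).contacts.map Prod.fst).toFinset).card ≤ B := by
        intro e
        have hsel : ∀ k : Fin m', e ∈ ((Ks k).contacts.map Prod.fst).toFinset →
            ∃ t, (Ks k).uses e t := by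
          intro k hk
          simp only [List.mem_toFinset, List.mem_map] at hk
          obtain ⟨c, hc, rfl⟩ := hk
          exact ⟨c.2, hc⟩
        set T' := S.filter fun k => e ∈ ((Ks k).contacts.map Prod.fst).toFinset with hT'def
        have hmem : ∀ k ∈ T', e ∈ ((Ks k).contacts.map Prod.fst).toFinset := fun k hk =>
          (Finset.mem_filter.mp hk).2
        set g : Fin m' → ℕ := fun k =>
          if h : e ∈ ((Ks k).contacts.map Prod.fst).toFinset then
            ((hsel k h).choose - 1) / δ else 0 with hgdef
        have hrange : ∀ k, (hk : e ∈ ((Ks k).contacts.map Prod.fst).toFinset) →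
            1 ≤ (hsel k hk).choose ∧ (hsel k hk).choose ≤ G.T := by
          intro k hk
          have huse := (hsel k hk).choose_spec
          have hcon := (Ks k).valid _ huse
          exact ⟨hcon.2.1, hcon.2.2.1⟩
        have hmaps : ∀ k ∈ T', g k ∈ Finset.range B := by
          intro k hk
          have hk' := hmem k hk
          rw [hgdef]
          simp only [hk', dif_pos]
          rw [Finset.mem_range, hBdef]
          have := hrange k hk'
          exact Nat.lt_succ_of_le (Nat.div_le_div_right (by omega))
        have hinj : Set.InjOn g (T' : Set (Fin m')) := by
          intro k hk k' hk' hgg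
          by_contra hne
          have hk1 := hmem k (Finset.mem_coe.mp hk)
          have hk2 := hmem k' (Finset.mem_coe.mp hk')
          rw [hgdef] at hgg
          simp only [hk1, hk2, dif_pos] at hgg
          set t1 := (hsel k hk1).choose with ht1
          set t2 := (hsel k' hk2).choose with ht2
          have hu1 := (hsel k hk1).choose_spec
          have hu2 := (hsel k' hk2).choose_spec
          have hdisj : δ ≤ t1 - t2 + (t2 - t1) := hKs k k' hne e t1 t2 hu1 hu2
          have hr1 := hrange k hk1
          have hr2 := hrange k' hk2
          have e1 := Nat.div_add_mod (t1 - 1) δ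
          have e2 := Nat.div_add_mod (t2 - 1) δ
          have m1 := Nat.mod_lt (t1 - 1) (show 0 < δ from hδ)
          have m2 := Nat.mod_lt (t2 - 1) (show 0 < δ from hδ)
          rw [hgg] at e1
          set a := δ * ((t2 - 1) / δ) with hadef
          omega
        have := Finset.card_le_card_of_injOn g hmaps hinj
        rwa [Finset.card_range] at this
      -- double counting
      have hdouble : S.card * (Js i).contacts.length ≤ G.E.card * B := by
        have hstep1 : S.card * (Js i).contacts.length = ∑ _k ∈ S, (Js i).contacts.length := by
          rw [Finset.sum_const, smul_eq_mul]
        rw [hstep1]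
        calc ∑ k ∈ S, (Js i).contacts.length
            ≤ ∑ k ∈ S, ((Ks k).contacts.map Prod.fst).toFinset.card :=
              Finset.sum_le_sum hlong
        _ = ∑ k ∈ S, (G.E.filter fun e => e ∈ ((Ks k).contacts.map Prod.fst).toFinset).card := by
            refine Finset.sum_congr rfl fun k _ => ?_
            congr 1
            ext e
            simp only [Finset.mem_filter, List.mem_toFinset, List.mem_map]
            constructor
            · rintro ⟨c, hc, rfl⟩
              exact ⟨((Ks k).valid c hc).1, c, hc, rfl⟩
            · rintro ⟨-, h⟩
              exact h
        _ = ∑ k ∈ S, ∑ e ∈ G.E,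
              if e ∈ ((Ks k).contacts.map Prod.fst).toFinset then 1 else 0 := by
            refine Finset.sum_congr rfl fun k _ => ?_
            rw [Finset.card_filter]
        _ = ∑ e ∈ G.E, ∑ k ∈ S,
              if e ∈ ((Ks k).contacts.map Prod.fst).toFinset then 1 else 0 :=
            Finset.sum_comm
        _ = ∑ e ∈ G.E,
              (S.filter fun k => e ∈ ((Ks k).contacts.map Prod.fst).toFinset).card := by
            refine Finset.sum_congr rfl fun e _ => ?_
            rw [Finset.card_filter]
        _ ≤ ∑ _e ∈ G.E, B := Finset.sum_le_sum fun e _ => hedge e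
        _ = G.E.card * B := by rw [Finset.sum_const, smul_eq_mul]
      have hBr : (B : ℝ) ≤ (G.T : ℝ) / (δ : ℝ) + 1 := by
        have hc1 : (((G.T - 1) / δ : ℕ) : ℝ) ≤ ((G.T - 1 : ℕ) : ℝ) / (δ : ℝ) :=
          Nat.cast_div_le
        have hc2 : ((G.T - 1 : ℕ) : ℝ) ≤ (G.T : ℝ) := by
          exact_mod_cast Nat.sub_le G.T 1
        have hc3 : ((G.T - 1 : ℕ) : ℝ) / (δ : ℝ) ≤ (G.T : ℝ) / (δ : ℝ) := by gcongr
        have hc4 : (B : ℝ) = (((G.T - 1) / δ : ℕ) : ℝ) + 1 := by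
          rw [hBdef]; push_cast; ring
        rw [hc4]
        linarith
      have hlenpos : (0 : ℝ) < ((Js i).contacts.length : ℝ) := lt_trans hL0 hcase
      have hEB : ((G.E.card : ℝ)) * (B : ℝ) ≤ Cr := by
        rw [hCrdef]
        exact mul_le_mul_of_nonneg_left hBr (Nat.cast_nonneg _)
      have hfinal : (S.card : ℝ) ≤ Cr / ((Js i).contacts.length : ℝ) := by
        rw [le_div_iff₀ hlenpos]
        calc (S.card : ℝ) * ((Js i).contacts.length : ℝ)
            = ((S.card * (Js i).contacts.length : ℕ) : ℝ) := by push_cast; ring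
        _ ≤ ((G.E.card * B : ℕ) : ℝ) := by exact_mod_cast hdouble
        _ = ((G.E.card : ℝ)) * (B : ℝ) := by push_cast; ring
        _ ≤ Cr := hEB
      calc (S.card : ℝ) ≤ Cr / ((Js i).contacts.length : ℝ) := hfinal
      _ ≤ Cr / L := by
          apply div_le_div_of_nonneg_left (by linarith) hL0 (le_of_lt hcase)
      _ = L := by rw [hLdef, Real.div_sqrt]
      _ ≤ 2 * L := by linarith
  -- sum over fibers
  have hm'sum : (m' : ℝ) ≤ (m : ℝ) * (2 * L) := by
    have h1 : m' = ∑ i : Fin m, (Finset.univ.filter fun k => f k = i).card := by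
      rw [← hcardsum, Finset.card_univ, Fintype.card_fin]
    have h2 : (m' : ℝ) = ∑ i : Fin m, (((Finset.univ.filter fun k => f k = i).card : ℕ) : ℝ) := by
      exact_mod_cast congrArg (Nat.cast : ℕ → ℝ) h1
    rw [h2]
    calc ∑ i : Fin m, (((Finset.univ.filter fun k => f k = i).card : ℕ) : ℝ)
        ≤ ∑ _i : Fin m, 2 * L := Finset.sum_le_sum fun i _ => hfiber i
    _ = (m : ℝ) * (2 * L) := by
        rw [Finset.sum_const, Finset.card_univ, Fintype.card_fin, nsmul_eq_mul]
  have hm1 : (1 : ℝ) ≤ (m : ℝ) := by exact_mod_cast hm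
  calc (m' : ℝ) ≤ (m : ℝ) * (2 * L) := hm'sum
  _ < (3 * L + 2) * (m : ℝ) := by nlinarith
end

section
/- Let C be any set of contacts in a time-varying graph, and assign each contact (e,t) the weight ω_{e,t} = 1/K_{e,t}, where K_{e,t} is the maximum number of contacts of C on edge e contained in any window of δ consecutive slots containing t. Then the minimum number of δ-removals needed to cover all contacts of C, denoted |Cover_δ(C)|, satisfies Σ_{(e,t)∈C} ω_{e,t} ≤ |Cover_δ(C)| ≤ δ·Σ_{(e,t)∈C} ω_{e,t}. -/
/-- `K_{e,t}` relative to a contact set `C`: the maximum number of contacts of `C`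
on edge `e` contained in a window of `δ` consecutive slots containing `t`. -/
def windowCount {α : Type} [DecidableEq α] (δ : ℕ) (C : Finset (α × ℕ))
    (e : α) (t : ℕ) : ℕ :=
  (Finset.Icc (t + 1 - δ) t).sup fun w =>
    (C.filter fun c => c.1 = e ∧ w ≤ c.2 ∧ c.2 < w + δ).card

/-- The weight `ω_{e,t} = 1 / K_{e,t}` of a contact. -/
noncomputable def contactWeight {α : Type} [DecidableEq α] (δ : ℕ)
    (C : Finset (α × ℕ)) (c : α × ℕ) : ℝ :=
  1 / (windowCount δ C c.1 c.2 : ℝ)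

/-- `R` is a set of heads of `δ`-removals covering every contact of `C`:
each `(e,t) ∈ C` lies in some window `[r, r + δ - 1]` of a removal of edge `e`. -/
def IsCover {α : Type} (δ : ℕ) (C R : Finset (α × ℕ)) : Prop :=
  ∀ c ∈ C, ∃ r ∈ R, r.1 = c.1 ∧ r.2 ≤ c.2 ∧ c.2 < r.2 + δ

/-- `|Cover_δ(C)|`: the minimum number of `δ`-removals needed to cover `C`. -/
noncomputable def coverNum {α : Type} (δ : ℕ) (C : Finset (α × ℕ)) : ℕ :=
  sInf {k | ∃ R : Finset (α × ℕ), R.card = k ∧ IsCover δ C R}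

lemma windowCount_le {α : Type} [DecidableEq α] (δ : ℕ) (C : Finset (α × ℕ))
    (e : α) (t : ℕ) : windowCount δ C e t ≤ δ := by
  apply Finset.sup_le
  intro w _
  calc (C.filter fun c => c.1 = e ∧ w ≤ c.2 ∧ c.2 < w + δ).card
      ≤ (Finset.Ico w (w + δ)).card := by
        apply Finset.card_le_card_of_injOn (fun c => c.2)
        · intro c hc
          simp only [Finset.mem_coe, Finset.mem_filter] at hc
          simp only [Finset.mem_coe, Finset.mem_Ico]
          exact ⟨hc.2.2.1, hc.2.2.2⟩
        · intro a ha b hb hab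
          simp only [Finset.mem_coe, Finset.mem_filter] at ha hb
          exact Prod.ext (ha.2.1.trans hb.2.1.symm) hab
    _ = δ := by simp

lemma one_le_windowCount {α : Type} [DecidableEq α] {δ : ℕ} (hδ : 1 ≤ δ)
    {C : Finset (α × ℕ)} {c : α × ℕ} (hc : c ∈ C) :
    1 ≤ windowCount δ C c.1 c.2 := by
  refine le_trans ?_ (Finset.le_sup (b := c.2) ?_)
  · rw [Finset.one_le_card]
    exact ⟨c, Finset.mem_filter.mpr ⟨hc, rfl, le_refl _, by omega⟩⟩
  · simp only [Finset.mem_Icc]; omega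

lemma card_le_windowCount {α : Type} [DecidableEq α] {δ : ℕ}
    {C : Finset (α × ℕ)} {c r : α × ℕ} (he : c.1 = r.1)
    (h1 : r.2 ≤ c.2) (h2 : c.2 < r.2 + δ) :
    (C.filter fun c' => c'.1 = r.1 ∧ r.2 ≤ c'.2 ∧ c'.2 < r.2 + δ).card
      ≤ windowCount δ C c.1 c.2 := by
  rw [he, windowCount]
  have hm : r.2 ∈ Finset.Icc (c.2 + 1 - δ) c.2 := Finset.mem_Icc.mpr ⟨by omega, h1⟩
  exact Finset.le_sup (f := fun w => (C.filter fun c => c.1 = r.1 ∧ w ≤ c.2 ∧ c.2 < w + δ).card) hm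

/-- Sandwich lemma: for any set `C` of contacts, with weights `ω_{e,t} = 1/K_{e,t}`,
`Σ_C ω ≤ |Cover_δ(C)| ≤ δ · Σ_C ω`. -/
theorem cover_sandwich {α : Type} [DecidableEq α] (δ : ℕ) (hδ : 1 ≤ δ)
    (C : Finset (α × ℕ)) :
    (∑ c ∈ C, contactWeight δ C c) ≤ (coverNum δ C : ℝ) ∧
    (coverNum δ C : ℝ) ≤ (δ : ℝ) * ∑ c ∈ C, contactWeight δ C c := by
  have hCover : IsCover δ C C := fun c hc => ⟨c, hc, rfl, le_refl _, by omega⟩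
  have hmem : C.card ∈ {k | ∃ R : Finset (α × ℕ), R.card = k ∧ IsCover δ C R} :=
    ⟨C, rfl, hCover⟩
  constructor
  · -- lower bound
    obtain ⟨R, hRcard, hR⟩ := Nat.sInf_mem (⟨C.card, hmem⟩ :
      Set.Nonempty {k | ∃ R : Finset (α × ℕ), R.card = k ∧ IsCover δ C R})
    classical
    set f : α × ℕ → α × ℕ := fun c => if h : c ∈ C then (hR c h).choose else c with hf
    have hspec : ∀ c (h : c ∈ C), f c ∈ R ∧ (f c).1 = c.1 ∧ (f c).2 ≤ c.2 ∧ c.2 < (f c).2 + δ := by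
      intro c h
      have := (hR c h).choose_spec
      simp only [hf, dif_pos h]
      exact this
    have hsum : ∑ r ∈ R, ∑ c ∈ C.filter (fun c => f c = r), contactWeight δ C c
        = ∑ c ∈ C, contactWeight δ C c :=
      Finset.sum_fiberwise_of_maps_to (fun c hc => (hspec c hc).1) _
    rw [← hsum, coverNum, ← hRcard]
    have : (R.card : ℝ) = ∑ r ∈ R, (1 : ℝ) := by simp
    rw [this]
    apply Finset.sum_le_sum
    intro r hr
    set S := C.filter (fun c' => c'.1 = r.1 ∧ r.2 ≤ c'.2 ∧ c'.2 < r.2 + δ) with hS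
    have hsub : C.filter (fun c => f c = r) ⊆ S := by
      intro c hc
      simp only [Finset.mem_filter] at hc
      obtain ⟨hcC, hfc⟩ := hc
      obtain ⟨_, h1, h2, h3⟩ := hspec c hcC
      rw [hfc] at h1 h2 h3
      exact Finset.mem_filter.mpr ⟨hcC, h1.symm, h2, h3⟩
    rcases Finset.eq_empty_or_nonempty (C.filter (fun c => f c = r)) with he | ⟨c0, hc0⟩
    · rw [he]; simp
    · have hSpos : 0 < S.card := Finset.card_pos.mpr ⟨c0, hsub hc0⟩
      have hbound : ∀ c ∈ C.filter (fun c => f c = r),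
          contactWeight δ C c ≤ 1 / (S.card : ℝ) := by
        intro c hc
        have hcS := hsub hc
        simp only [hS, Finset.mem_filter] at hcS
        have hK : S.card ≤ windowCount δ C c.1 c.2 :=
          card_le_windowCount hcS.2.1 hcS.2.2.1 hcS.2.2.2
        rw [contactWeight]
        apply one_div_le_one_div_of_le
        · exact_mod_cast hSpos
        · exact_mod_cast hK
      calc ∑ c ∈ C.filter (fun c => f c = r), contactWeight δ C c
          ≤ ∑ _c ∈ C.filter (fun c => f c = r), 1 / (S.card : ℝ) :=
            Finset.sum_le_sum hbound
        _ = (C.filter (fun c => f c = r)).card * (1 / (S.card : ℝ)) := by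
            rw [Finset.sum_const, nsmul_eq_mul]
        _ ≤ S.card * (1 / (S.card : ℝ)) := by
            apply mul_le_mul_of_nonneg_right
            · exact_mod_cast Finset.card_le_card hsub
            · positivity
        _ = 1 := by field_simp
  · -- upper bound
    have h1 : (coverNum δ C : ℝ) ≤ C.card := by
      exact_mod_cast Nat.sInf_le hmem
    refine h1.trans ?_
    rw [Finset.mul_sum]
    calc (C.card : ℝ) = ∑ _c ∈ C, (1 : ℝ) := by simp
      _ ≤ ∑ c ∈ C, (δ : ℝ) * contactWeight δ C c := by
          apply Finset.sum_le_sum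
          intro c hc
          have h1K : 1 ≤ windowCount δ C c.1 c.2 := one_le_windowCount hδ hc
          have hKδ : windowCount δ C c.1 c.2 ≤ δ := windowCount_le δ C c.1 c.2
          rw [contactWeight, mul_one_div, le_div_iff₀ (by exact_mod_cast h1K), one_mul]
          exact_mod_cast hKδ
end

section
/- The min-weight algorithm for δ-MINCUT achieves a δ-approximation: if C_ALG is the contact set disabled by the algorithm's solution and C* the contact set disabled by an optimal solution, then |Cover_δ(C_ALG)| ≤ δ·|Cover_δ(C*)|. -/
variable {V : Type}

/-- The set of all contacts of a time-varying graph. -/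
def TVG.contactSet (G : TVG V) : Finset ((V × V) × ℕ) :=
  (G.E ×ˢ Finset.Icc 1 G.T).filter fun c => G.ρ c.1 c.2 = true

/-- A set of contacts whose deletion disconnects `d` from `s`: every `s`-`d` journey
uses some contact of the set. -/
def Disconnecting (G : TVG V) (s d : V) (C : Finset ((V × V) × ℕ)) : Prop :=
  ∀ J : G.Journey s d, ∃ c ∈ J.contacts, c ∈ C

lemma aux_windowCount_pos {α : Type} [DecidableEq α] (δ : ℕ) (hδ : 1 ≤ δ)
    (S : Finset (α × ℕ)) (c : α × ℕ) (hc : c ∈ S) :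
    1 ≤ windowCount δ S c.1 c.2 := by
  unfold windowCount
  have hw : c.2 ∈ Finset.Icc (c.2 + 1 - δ) c.2 := by
    simp only [Finset.mem_Icc]; omega
  refine le_trans ?_ (Finset.le_sup hw)
  have hmem : c ∈ S.filter fun x => x.1 = c.1 ∧ c.2 ≤ x.2 ∧ x.2 < c.2 + δ :=
    Finset.mem_filter.mpr ⟨hc, rfl, le_refl _, by omega⟩
  exact Finset.card_pos.mpr ⟨c, hmem⟩

lemma aux_count_le_windowCount {α : Type} [DecidableEq α] (δ : ℕ) (S : Finset (α × ℕ))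
    (e : α) (t w : ℕ) (hw1 : w ≤ t) (hw2 : t < w + δ) :
    (S.filter fun c => c.1 = e ∧ w ≤ c.2 ∧ c.2 < w + δ).card ≤ windowCount δ S e t := by
  unfold windowCount
  refine Finset.le_sup
    (f := fun w => (S.filter fun c => c.1 = e ∧ w ≤ c.2 ∧ c.2 < w + δ).card) ?_
  simp only [Finset.mem_Icc]; omega

lemma aux_windowCount_le {α : Type} [DecidableEq α] (δ : ℕ) (S : Finset (α × ℕ))
    (e : α) (t : ℕ) : windowCount δ S e t ≤ δ := by
  apply Finset.sup_le; intro w _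
  calc (S.filter fun c => c.1 = e ∧ w ≤ c.2 ∧ c.2 < w + δ).card
      ≤ (Finset.Ico w (w + δ)).card := by
        apply Finset.card_le_card_of_injOn (fun c => c.2)
        · intro c hc
          simp only [Finset.mem_coe, Finset.mem_filter] at hc
          simp only [Finset.mem_coe, Finset.mem_Ico]; omega
        · intro c hc c' hc' h
          simp only [Finset.mem_coe, Finset.mem_filter] at hc hc'
          exact Prod.ext (hc.2.1.trans hc'.2.1.symm) h
    _ = δ := by simp

/-- The set of possible cover sizes is nonempty (take `R = C`). -/
lemma aux_cover_nonempty {α : Type} (δ : ℕ) (hδ : 1 ≤ δ) (C : Finset (α × ℕ)) :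
    C.card ∈ {k | ∃ R : Finset (α × ℕ), R.card = k ∧ IsCover δ C R} :=
  ⟨C, rfl, fun c hc => ⟨c, hc, rfl, le_refl _, by omega⟩⟩

/-- Lower half of the sandwich: the total weight of `C` is at most `coverNum δ C`. -/
lemma aux_sum_weight_le_coverNum {α : Type} [DecidableEq α] (δ : ℕ) (hδ : 1 ≤ δ)
    (S C : Finset (α × ℕ)) (hC : C ⊆ S) :
    ∑ c ∈ C, contactWeight δ S c ≤ (coverNum δ C : ℝ) := by
  obtain ⟨R, hRcard, hRcover⟩ :=
    Nat.sInf_mem (Set.nonempty_of_mem (aux_cover_nonempty δ hδ C))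
  rw [show coverNum δ C = R.card from hRcard.symm]
  classical
  -- assignment of each contact to a covering removal
  set f : α × ℕ → α × ℕ := fun c =>
    if h : ∃ r ∈ R, r.1 = c.1 ∧ r.2 ≤ c.2 ∧ c.2 < r.2 + δ then h.choose else c with hf
  have hfspec : ∀ c ∈ C, f c ∈ R ∧ (f c).1 = c.1 ∧ (f c).2 ≤ c.2 ∧ c.2 < (f c).2 + δ := by
    intro c hc
    have h := hRcover c hc
    simp only [hf, dif_pos h]
    obtain ⟨hr, hspec⟩ := h.choose_spec
    exact ⟨hr, hspec⟩
  have hmaps : ∀ c ∈ C, f c ∈ R := fun c hc => (hfspec c hc).1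
  rw [← Finset.sum_fiberwise_of_maps_to hmaps (contactWeight δ S)]
  calc ∑ r ∈ R, ∑ c ∈ C.filter fun c => f c = r, contactWeight δ S c
      ≤ ∑ r ∈ R, (1 : ℝ) := by
        apply Finset.sum_le_sum
        intro r hr
        set fib := C.filter fun c => f c = r with hfib
        rcases Finset.eq_empty_or_nonempty fib with he | hne
        · rw [he]; simp
        · set N := (S.filter fun c => c.1 = r.1 ∧ r.2 ≤ c.2 ∧ c.2 < r.2 + δ).card with hN
          have hsub : fib ⊆ S.filter fun c => c.1 = r.1 ∧ r.2 ≤ c.2 ∧ c.2 < r.2 + δ := by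
            intro c hc
            simp only [hfib, Finset.mem_filter] at hc
            obtain ⟨hcC, hcr⟩ := hc
            obtain ⟨_, h1, h2, h3⟩ := hfspec c hcC
            rw [hcr] at h1 h2 h3
            simp only [Finset.mem_filter]
            exact ⟨hC hcC, h1.symm, h2, h3⟩
          have hcard : fib.card ≤ N := Finset.card_le_card hsub
          have hNpos : 0 < N := lt_of_lt_of_le (Finset.card_pos.mpr hne) hcard
          have hle : ∀ c ∈ fib, contactWeight δ S c ≤ 1 / (N : ℝ) := by
            intro c hc
            have hcfib := hc
            simp only [hfib, Finset.mem_filter] at hcfib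
            obtain ⟨hcC, hcr⟩ := hcfib
            obtain ⟨_, h1, h2, h3⟩ := hfspec c hcC
            rw [hcr] at h1 h2 h3
            have hNK : N ≤ windowCount δ S c.1 c.2 := by
              rw [hN, h1]
              exact aux_count_le_windowCount δ S c.1 c.2 r.2 h2 h3
            unfold contactWeight
            apply one_div_le_one_div_of_le
            · exact_mod_cast hNpos
            · exact_mod_cast hNK
          calc ∑ c ∈ fib, contactWeight δ S c
              ≤ fib.card • (1 / (N : ℝ)) := Finset.sum_le_card_nsmul _ _ _ hle
            _ = (fib.card : ℝ) / N := by
                rw [nsmul_eq_mul]; ring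
            _ ≤ 1 := by
                rw [div_le_one (by exact_mod_cast hNpos)]
                exact_mod_cast hcard
    _ = (R.card : ℝ) := by simp
  -- done

/-- Upper half of the sandwich: `coverNum δ C ≤ δ · (total weight of C)`. -/
lemma aux_coverNum_le_delta_sum {α : Type} [DecidableEq α] (δ : ℕ) (hδ : 1 ≤ δ)
    (S C : Finset (α × ℕ)) (hC : C ⊆ S) :
    (coverNum δ C : ℝ) ≤ δ * ∑ c ∈ C, contactWeight δ S c := by
  have h1 : coverNum δ C ≤ C.card := Nat.sInf_le (aux_cover_nonempty δ hδ C)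
  have h2 : (C.card : ℝ) ≤ δ * ∑ c ∈ C, contactWeight δ S c := by
    have : ∀ c ∈ C, (1 : ℝ) / δ ≤ contactWeight δ S c := by
      intro c hc
      unfold contactWeight
      apply one_div_le_one_div_of_le
      · exact_mod_cast aux_windowCount_pos δ hδ S c (hC hc)
      · exact_mod_cast aux_windowCount_le δ S c.1 c.2
    have hsum : (C.card : ℝ) * (1 / δ) ≤ ∑ c ∈ C, contactWeight δ S c := by
      calc (C.card : ℝ) * (1 / δ) = ∑ _c ∈ C, (1 : ℝ) / δ := by
            rw [Finset.sum_const, nsmul_eq_mul]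
        _ ≤ ∑ c ∈ C, contactWeight δ S c := Finset.sum_le_sum this
    have hδR : (0 : ℝ) < δ := by exact_mod_cast hδ
    calc (C.card : ℝ) = δ * ((C.card : ℝ) * (1 / δ)) := by field_simp
      _ ≤ δ * ∑ c ∈ C, contactWeight δ S c := by
          exact mul_le_mul_of_nonneg_left hsum (le_of_lt hδR)
  exact le_trans (by exact_mod_cast h1) h2

/-- The min-weight algorithm achieves a `δ`-approximation for `δ`-MINCUT: if
`C_ALG` is a minimum-weight disconnecting contact set (weights `ω = 1/K` computed
over all contacts of the graph) and `C*` is the contact set disabled by an optimal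
solution, then `|Cover_δ(C_ALG)| ≤ δ · |Cover_δ(C*)|`. -/
theorem minWeight_delta_approx [DecidableEq V] (G : TVG V) (s d : V) (δ : ℕ)
    (hδ : 1 ≤ δ) (CALG COPT : Finset ((V × V) × ℕ))
    (hsubA : CALG ⊆ G.contactSet) (hsubO : COPT ⊆ G.contactSet)
    (hA : Disconnecting G s d CALG) (hO : Disconnecting G s d COPT)
    (hmin : ∀ C' ⊆ G.contactSet, Disconnecting G s d C' →
      ∑ c ∈ CALG, contactWeight δ G.contactSet c ≤
        ∑ c ∈ C', contactWeight δ G.contactSet c) :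
    coverNum δ CALG ≤ δ * coverNum δ COPT := by
  have key : (coverNum δ CALG : ℝ) ≤ (δ : ℝ) * (coverNum δ COPT : ℝ) := by
    calc (coverNum δ CALG : ℝ)
        ≤ δ * ∑ c ∈ CALG, contactWeight δ G.contactSet c :=
          aux_coverNum_le_delta_sum δ hδ _ _ hsubA
      _ ≤ δ * ∑ c ∈ COPT, contactWeight δ G.contactSet c := by
          apply mul_le_mul_of_nonneg_left (hmin COPT hsubO hO)
          exact_mod_cast Nat.zero_le δ
      _ ≤ (δ : ℝ) * (coverNum δ COPT : ℝ) := by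
          apply mul_le_mul_of_nonneg_left
            (aux_sum_weight_le_coverNum δ hδ _ _ hsubO)
          exact_mod_cast Nat.zero_le δ
  exact_mod_cast key
end
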